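/- arXiv:2504.05821 — 11 statements merged into one kernel-verified Lean document; each statement's English description precedes it below -/
import Mathlib

section
/- If B is a bialgebra over a field k and Id denotes the identity map of B, regarded as an element of the convolution algebra End_k(B), and if the subalgebra k[Id] generated by Id in the convolution algebra is finite-dimensional (e.g. if B is finite-dimensional), then there exist n ∈ ℕ and S ∈ End_k(B) with S * Id^{*(n+1)} = Id^{*n} and S * Id = Id * S in the convolution algebra, so that S is simultaneously a left and right n-antipode. -/
noncomputable section
open TensorProduct LinearMap

/-- Convolution product of linear maps from a bialgebra to an algebra. -/
def conv {k B A : Type*} [CommRing k] [Ring B] [Bialgebra k B]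
    [Ring A] [Algebra k A] (f g : B →ₗ[k] A) : B →ₗ[k] A :=
  LinearMap.mul' k A ∘ₗ TensorProduct.map f g ∘ₗ Coalgebra.comul

/-- Unit of the convolution algebra: u ∘ ε. -/
def convUnit (k B A : Type*) [CommRing k] [Ring B] [Bialgebra k B]
    [Ring A] [Algebra k A] : B →ₗ[k] A :=
  Algebra.linearMap k A ∘ₗ Coalgebra.counit

/-- n-th convolution power of the identity. -/
def convPow (k B : Type*) [CommRing k] [Ring B] [Bialgebra k B] : ℕ → (B →ₗ[k] B)
  | 0 => convUnit k B B
  | n + 1 => conv (convPow k B n) LinearMap.id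

/-- The submodule (B ⊗ B)·Δ(ker ε) of B ⊗ B. -/
def oslashRel (k B : Type*) [CommRing k] [Ring B] [Bialgebra k B] :
    Submodule k (B ⊗[k] B) :=
  Submodule.span k {z | ∃ (m : B ⊗[k] B) (b : B),
    Coalgebra.counit (R := k) b = 0 ∧ z = m * Coalgebra.comul b}

/-- B ⊘ B. -/
abbrev Oslash (k B : Type*) [CommRing k] [Ring B] [Bialgebra k B] :=
  (B ⊗[k] B) ⧸ oslashRel k B

/-- The class of x ⊗ y in B ⊘ B. -/
abbrev omk (k : Type*) {B : Type*} [CommRing k] [Ring B] [Bialgebra k B]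
    (z : B ⊗[k] B) : Oslash k B := Submodule.Quotient.mk z

/-- i_B : B → B ⊘ B, b ↦ b ⊘ 1. -/
def iB (k B : Type*) [CommRing k] [Ring B] [Bialgebra k B] : B →ₗ[k] Oslash k B :=
  (oslashRel k B).mkQ ∘ₗ (TensorProduct.mk k B B).flip 1

/-- The diagonal right coaction of B on B ⊗ B: Σ x₁ ⊗ y₁ ⊗ x₂y₂. -/
def coact (k B : Type*) [CommRing k] [Ring B] [Bialgebra k B] :
    (B ⊗[k] B) →ₗ[k] (B ⊗[k] B) ⊗[k] B :=
  (TensorProduct.map LinearMap.id (LinearMap.mul' k B)) ∘ₗ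
    (TensorProduct.tensorTensorTensorComm k B B B B).toLinearMap ∘ₗ
    (TensorProduct.map Coalgebra.comul Coalgebra.comul)

/-- z ↦ z ⊗ 1. -/
def unitR (k B : Type*) [CommRing k] [Ring B] [Bialgebra k B] :
    (B ⊗[k] B) →ₗ[k] (B ⊗[k] B) ⊗[k] B :=
  (TensorProduct.map LinearMap.id (Algebra.linearMap k B)) ∘ₗ
    (TensorProduct.rid k (B ⊗[k] B)).symm.toLinearMap

/-- B ⧄ B : the coinvariants of B ⊗ B. -/
def coinv (k B : Type*) [CommRing k] [Ring B] [Bialgebra k B] :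
    Submodule k (B ⊗[k] B) :=
  LinearMap.eqLocus (coact k B) (unitR k B)

/-- Σ x ⊗ y ↦ Σ x ε(y), on all of B ⊗ B. -/
def pB0 (k B : Type*) [CommRing k] [Ring B] [Bialgebra k B] :
    (B ⊗[k] B) →ₗ[k] B :=
  (TensorProduct.rid k B).toLinearMap ∘ₗ TensorProduct.map LinearMap.id Coalgebra.counit

/-- Σ x ⊗ y ↦ Σ ε(x) y, on all of B ⊗ B. -/
def qB0 (k B : Type*) [CommRing k] [Ring B] [Bialgebra k B] :
    (B ⊗[k] B) →ₗ[k] B :=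
  (TensorProduct.lid k B).toLinearMap ∘ₗ TensorProduct.map Coalgebra.counit LinearMap.id

/-- p_B : B ⧄ B → B. -/
def pB (k B : Type*) [CommRing k] [Ring B] [Bialgebra k B] :
    coinv k B →ₗ[k] B :=
  pB0 k B ∘ₗ (coinv k B).subtype

section Aux
variable {k B : Type*} [CommRing k] [Ring B] [Bialgebra k B]

lemma conv_unit_left (f : B →ₗ[k] B) : conv (convUnit k B B) f = f := by
  ext b
  have h : (TensorProduct.map (Coalgebra.counit (R := k) (A := B)) LinearMap.id)
      (Coalgebra.comul (R := k) b) = (1 : k) ⊗ₜ[k] b :=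
    Coalgebra.rTensor_counit_comul (R := k) b
  have hdec : (TensorProduct.map ((Algebra.linearMap k B) ∘ₗ Coalgebra.counit) f :
      B ⊗[k] B →ₗ[k] B ⊗[k] B)
      = TensorProduct.map (Algebra.linearMap k B) f ∘ₗ
        TensorProduct.map Coalgebra.counit LinearMap.id := by
    rw [← TensorProduct.map_comp, LinearMap.comp_id]
  simp only [conv, convUnit, LinearMap.comp_apply, hdec, h]
  simp [LinearMap.mul'_apply]

lemma conv_unit_right (f : B →ₗ[k] B) : conv f (convUnit k B B) = f := by
  ext b
  have h : (TensorProduct.map (LinearMap.id) (Coalgebra.counit (R := k) (A := B)))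
      (Coalgebra.comul (R := k) b) = b ⊗ₜ[k] (1 : k) :=
    Coalgebra.lTensor_counit_comul (R := k) b
  have hdec : (TensorProduct.map f ((Algebra.linearMap k B) ∘ₗ Coalgebra.counit) :
      B ⊗[k] B →ₗ[k] B ⊗[k] B)
      = TensorProduct.map f (Algebra.linearMap k B) ∘ₗ
        TensorProduct.map LinearMap.id Coalgebra.counit := by
    rw [← TensorProduct.map_comp, LinearMap.comp_id]
  simp only [conv, convUnit, LinearMap.comp_apply, hdec, h]
  simp [LinearMap.mul'_apply]

lemma conv_assoc (f g h : B →ₗ[k] B) : conv (conv f g) h = conv f (conv g h) := by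
  ext b
  have e1 : ∀ z : (B ⊗[k] B) ⊗[k] B,
      LinearMap.mul' k B ((TensorProduct.map (LinearMap.mul' k B) LinearMap.id) z)
      = LinearMap.mul' k B ((TensorProduct.map LinearMap.id (LinearMap.mul' k B))
          ((TensorProduct.assoc k B B B) z)) := by
    have : (LinearMap.mul' k B ∘ₗ TensorProduct.map (LinearMap.mul' k B) LinearMap.id)
        = LinearMap.mul' k B ∘ₗ TensorProduct.map LinearMap.id (LinearMap.mul' k B)
          ∘ₗ (TensorProduct.assoc k B B B).toLinearMap := by
      apply TensorProduct.ext_threefold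
      intro x y z
      simp [LinearMap.mul'_apply, mul_assoc]
    exact fun z => LinearMap.congr_fun this z
  have e2 : ∀ z : (B ⊗[k] B) ⊗[k] B,
      (TensorProduct.assoc k B B B) ((TensorProduct.map (TensorProduct.map f g) h) z)
      = (TensorProduct.map f (TensorProduct.map g h)) ((TensorProduct.assoc k B B B) z) :=
    fun z => (TensorProduct.map_map_assoc f g h z).symm
  have e3 : (TensorProduct.assoc k B B B)
      ((TensorProduct.map (Coalgebra.comul (R := k)) LinearMap.id)
        (Coalgebra.comul (R := k) b))
      = (TensorProduct.map LinearMap.id (Coalgebra.comul (R := k)))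
        (Coalgebra.comul (R := k) b) := by
    have := LinearMap.congr_fun (Coalgebra.coassoc (R := k) (A := B)) b
    simpa [LinearMap.rTensor, LinearMap.lTensor] using this
  have hdecL : (TensorProduct.map (LinearMap.mul' k B ∘ₗ TensorProduct.map f g ∘ₗ Coalgebra.comul) h :
      B ⊗[k] B →ₗ[k] B ⊗[k] B)
      = TensorProduct.map (LinearMap.mul' k B) LinearMap.id ∘ₗ
        TensorProduct.map (TensorProduct.map f g) h ∘ₗ
        TensorProduct.map Coalgebra.comul LinearMap.id := by
    rw [← TensorProduct.map_comp, ← TensorProduct.map_comp]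
    simp
  have hdecR : (TensorProduct.map f (LinearMap.mul' k B ∘ₗ TensorProduct.map g h ∘ₗ Coalgebra.comul) :
      B ⊗[k] B →ₗ[k] B ⊗[k] B)
      = TensorProduct.map LinearMap.id (LinearMap.mul' k B) ∘ₗ
        TensorProduct.map f (TensorProduct.map g h) ∘ₗ
        TensorProduct.map LinearMap.id Coalgebra.comul := by
    rw [← TensorProduct.map_comp, ← TensorProduct.map_comp]
    simp
  simp only [conv, LinearMap.comp_apply, hdecL, hdecR]
  rw [e1, e2, e3]

end Aux

section Aux2
variable {k B : Type*} [CommRing k] [Ring B] [Bialgebra k B]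

/-- Right convolution as a linear map. -/
def convR (g : B →ₗ[k] B) : (B →ₗ[k] B) →ₗ[k] (B →ₗ[k] B) where
  toFun f := conv f g
  map_add' f f' := by
    simp [conv, TensorProduct.map_add_left, LinearMap.add_comp, LinearMap.comp_add]
  map_smul' c f := by
    simp [conv, TensorProduct.map_smul_left, LinearMap.smul_comp, LinearMap.comp_smul]

/-- Left convolution as a linear map. -/
def convL (f : B →ₗ[k] B) : (B →ₗ[k] B) →ₗ[k] (B →ₗ[k] B) where
  toFun g := conv f g
  map_add' g g' := by
    simp [conv, TensorProduct.map_add_right, LinearMap.add_comp, LinearMap.comp_add]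
  map_smul' c g := by
    simp [conv, TensorProduct.map_smul_right, LinearMap.smul_comp, LinearMap.comp_smul]

lemma convPow_succ (n : ℕ) :
    convPow k B (n + 1) = conv (convPow k B n) LinearMap.id := rfl

lemma conv_convPow (m n : ℕ) :
    conv (convPow k B m) (convPow k B n) = convPow k B (m + n) := by
  induction n with
  | zero => simpa [convPow] using conv_unit_right (convPow k B m)
  | succ n ih =>
    rw [convPow_succ, ← conv_assoc, ih, ← convPow_succ, Nat.add_assoc]

end Aux2


theorem stmt0 (k B : Type*) [Field k] [Ring B] [Bialgebra k B]
    (hfd : FiniteDimensional k (Submodule.span k (Set.range (convPow k B)))) :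
    ∃ (n : ℕ) (S : B →ₗ[k] B),
      S ∈ Submodule.span k (Set.range (convPow k B)) ∧
      conv S (convPow k B (n + 1)) = convPow k B n ∧
      conv (convPow k B (n + 1)) S = convPow k B n ∧
      conv S LinearMap.id = conv LinearMap.id S := by
    classical
  set V := Submodule.span k (Set.range (convPow k B)) with hV
  have hmem : ∀ n, convPow k B n ∈ V := fun n => Submodule.subset_span ⟨n, rfl⟩
  -- the powers are linearly dependent
  have hnli : ¬ LinearIndependent k (fun n : ℕ => (⟨convPow k B n, hmem n⟩ : V)) := by
    intro h
    have := LinearIndependent.lt_aleph0_of_finiteDimensional (K := k) (V := V) h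
    simp [Cardinal.mk_nat] at this
  rw [not_linearIndependent_iff (R := k) (M := V)] at hnli
  obtain ⟨s, g, hsum, i0, hi0s, hgi0⟩ := hnli
  have hsum' : ∑ i ∈ s, g i • convPow k B i = 0 := by
    have := congrArg (Submodule.subtype V) hsum
    simpa using this
  -- least index with nonzero coefficient
  have hex : ∃ n, n ∈ s ∧ g n ≠ 0 := ⟨i0, hi0s, hgi0⟩
  set n := Nat.find hex with hn
  obtain ⟨hns, hgn⟩ : n ∈ s ∧ g n ≠ 0 := Nat.find_spec hex
  have hmin : ∀ m, m < n → ¬(m ∈ s ∧ g m ≠ 0) := fun m hm => Nat.find_min hex hm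
  -- split the sum
  have h1 : ∑ j ∈ s.filter (fun j => ¬ n < j), g j • convPow k B j
      = g n • convPow k B n := by
    apply Finset.sum_eq_single_of_mem
    · simp [hns]
    · intro j hj hjn
      obtain ⟨hjs, hjle⟩ := Finset.mem_filter.mp hj
      have hjlt : j < n := lt_of_le_of_ne (not_lt.mp hjle) hjn
      have : g j = 0 := by
        by_contra hgj
        exact hmin j hjlt ⟨hjs, hgj⟩
      rw [this, zero_smul]
  have h2 : ∑ j ∈ s.filter (fun j => n < j), g j • convPow k B j
      = -(g n • convPow k B n) := by
    have := (Finset.sum_filter_add_sum_filter_not s (fun j => n < j)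
      (fun j => g j • convPow k B j))
    rw [hsum'] at this
    rw [h1] at this
    linear_combination (norm := abel) this
  -- the candidate antipode
  set t := s.filter (fun j => n < j) with ht
  set S : B →ₗ[k] B := (-(g n)⁻¹) • ∑ j ∈ t, g j • convPow k B (j - (n + 1)) with hS
  have hsub : ∀ j ∈ t, j - (n + 1) + (n + 1) = j := by
    intro j hj
    have : n < j := (Finset.mem_filter.mp hj).2
    omega
  have key : ∀ m : ℕ, conv S (convPow k B m) =
      (-(g n)⁻¹) • ∑ j ∈ t, g j • convPow k B (j - (n + 1) + m) := by
    intro m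
    have : conv S (convPow k B m) = convR (convPow k B m) S := rfl
    rw [this, hS, map_smul, map_sum]
    congr 1
    refine Finset.sum_congr rfl fun j hj => ?_
    rw [map_smul]
    congr 1
    exact conv_convPow _ _
  have key' : ∀ m : ℕ, conv (convPow k B m) S =
      (-(g n)⁻¹) • ∑ j ∈ t, g j • convPow k B (m + (j - (n + 1))) := by
    intro m
    have : conv (convPow k B m) S = convL (convPow k B m) S := rfl
    rw [this, hS, map_smul, map_sum]
    congr 1
    refine Finset.sum_congr rfl fun j hj => ?_
    rw [map_smul]
    congr 1
    exact conv_convPow _ _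
  have hsum_t : ∑ j ∈ t, g j • convPow k B (j - (n + 1) + (n + 1))
      = -(g n • convPow k B n) := by
    rw [← h2]
    exact Finset.sum_congr rfl fun j hj => by rw [hsub j hj]
  have hleft : conv S (convPow k B (n + 1)) = convPow k B n := by
    rw [key (n + 1), hsum_t, smul_neg, neg_smul, neg_neg, smul_smul,
      inv_mul_cancel₀ hgn, one_smul]
  have hright : conv (convPow k B (n + 1)) S = convPow k B n := by
    rw [key' (n + 1)]
    have : ∑ j ∈ t, g j • convPow k B (n + 1 + (j - (n + 1)))
        = -(g n • convPow k B n) := by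
      rw [← hsum_t]
      exact Finset.sum_congr rfl fun j hj => by rw [Nat.add_comm]
    rw [this, smul_neg, neg_smul, neg_neg, smul_smul, inv_mul_cancel₀ hgn, one_smul]
  have hid : LinearMap.id = convPow k B 1 := by
    rw [convPow_succ]
    exact (conv_unit_left _).symm
  have hcomm : conv S LinearMap.id = conv LinearMap.id S := by
    rw [hid, key 1, key' 1]
    congr 1
    exact Finset.sum_congr rfl fun j hj => by rw [Nat.add_comm]
  refine ⟨n, S, ?_, hleft, hright, hcomm⟩
  exact Submodule.smul_mem _ _ (Submodule.sum_mem _ fun j _ =>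
    Submodule.smul_mem _ _ (hmem _))
end
end

section
/- Let B be a bialgebra and let B ⧄ B denote the space of coinvariants {Σ xᶦ ⊗ yᵢ ∈ B ⊗ B : Σ xᶦ₁ ⊗ yᵢ₁ ⊗ xᶦ₂yᵢ₂ = Σ xᶦ ⊗ yᵢ ⊗ 1}. Then B ⧄ B is a subalgebra of B ⊗ B^op (i.e. closed under (u ⊗ v)·(x ⊗ y) = ux ⊗ yv and containing 1 ⊗ 1), and every element Σ xᶦ ⊗ yᵢ ∈ B ⧄ B satisfies Σ xᶦyᵢ = Σ ε(xᶦ)ε(yᵢ)·1. -/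
noncomputable section
open TensorProduct LinearMap

set_option maxHeartbeats 1000000
set_option synthInstance.maxHeartbeats 400000

section Bridge
variable {R A' B' : Type*} [CommRing R] [Ring A'] [Ring B'] [Algebra R A'] [Algebra R B']

@[simp] lemma tp_mul_zero (x : A' ⊗[R] B') : x * 0 = 0 := mul_zero x
@[simp] lemma tp_zero_mul (x : A' ⊗[R] B') : 0 * x = 0 := zero_mul x
@[simp] lemma tp_mul_add (x y z : A' ⊗[R] B') : x * (y + z) = x * y + x * z := mul_add x y z
@[simp] lemma tp_add_mul (x y z : A' ⊗[R] B') : (x + y) * z = x * z + y * z := add_mul x y z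
@[simp] lemma tp_mul_one (x : A' ⊗[R] B') : x * 1 = x := mul_one x
@[simp] lemma tp_one_mul (x : A' ⊗[R] B') : 1 * x = x := one_mul x
lemma tp_mul_assoc (x y z : A' ⊗[R] B') : x * y * z = x * (y * z) := mul_assoc x y z

end Bridge

section Aux
variable (k B : Type*) [CommRing k] [Ring B] [Bialgebra k B]

/-- transport B ⊗ B to B ⊗ Bᵐᵒᵖ -/
def fM : (B ⊗[k] B) ≃ₗ[k] B ⊗[k] Bᵐᵒᵖ :=
  TensorProduct.congr (LinearEquiv.refl k B) (MulOpposite.opLinearEquiv k)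

def eE : ((B ⊗[k] B) ⊗[k] B) ≃ₗ[k] (B ⊗[k] Bᵐᵒᵖ) ⊗[k] B :=
  TensorProduct.congr (fM k B) (LinearEquiv.refl k B)

@[simp] lemma fM_tmul (u v : B) : fM k B (u ⊗ₜ v) = u ⊗ₜ MulOpposite.op v := by
  simp [fM]

@[simp] lemma fM_symm_tmul (u : B) (v : Bᵐᵒᵖ) :
    (fM k B).symm (u ⊗ₜ v) = u ⊗ₜ v.unop := by
  simp [fM]

@[simp] lemma eE_tmul (z : B ⊗[k] B) (c : B) : eE k B (z ⊗ₜ c) = fM k B z ⊗ₜ c := by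
  simp [eE]

/-- sandwich: (a ⊗ b) ↦ (t ↦ a * t * b) on A = (B ⊗ Bᵐᵒᵖ) ⊗ B -/
def S2 : ((B ⊗[k] Bᵐᵒᵖ) ⊗[k] B) →ₗ[k] ((B ⊗[k] Bᵐᵒᵖ) ⊗[k] B) →ₗ[k]
    ((B ⊗[k] Bᵐᵒᵖ) ⊗[k] B) →ₗ[k] ((B ⊗[k] Bᵐᵒᵖ) ⊗[k] B) :=
  ((LinearMap.llcomp k _ _ _ ∘ₗ
      (LinearMap.mul k ((B ⊗[k] Bᵐᵒᵖ) ⊗[k] B)).flip).flip) ∘ₗ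
    LinearMap.mul k ((B ⊗[k] Bᵐᵒᵖ) ⊗[k] B)

def SL : (((B ⊗[k] Bᵐᵒᵖ) ⊗[k] B) ⊗[k] ((B ⊗[k] Bᵐᵒᵖ) ⊗[k] B)) →ₗ[k]
    ((B ⊗[k] Bᵐᵒᵖ) ⊗[k] B) →ₗ[k] ((B ⊗[k] Bᵐᵒᵖ) ⊗[k] B) :=
  TensorProduct.lift (S2 k B)

@[simp] lemma SL_tmul (a b t : (B ⊗[k] Bᵐᵒᵖ) ⊗[k] B) :
    SL k B (a ⊗ₜ b) t = a * t * b := rfl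

/-- F : (B⊗B)⊗(B⊗B) → (B⊗B)⊗B -/
def FF : ((B ⊗[k] B) ⊗[k] (B ⊗[k] B)) →ₗ[k] (B ⊗[k] B) ⊗[k] B :=
  (TensorProduct.map LinearMap.id (LinearMap.mul' k B)) ∘ₗ
    (TensorProduct.tensorTensorTensorComm k B B B B).toLinearMap

@[simp] lemma FF_tmul (a b c d : B) :
    FF k B ((a ⊗ₜ b) ⊗ₜ (c ⊗ₜ d)) = (a ⊗ₜ c) ⊗ₜ (b * d) := by
  simp [FF]

lemma coact_tmul (a b : B) :
    coact k B (a ⊗ₜ b) = FF k B (Coalgebra.comul a ⊗ₜ Coalgebra.comul b) := rfl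

def jR : B →ₗ[k] (B ⊗[k] Bᵐᵒᵖ) ⊗[k] B := TensorProduct.mk k (B ⊗[k] Bᵐᵒᵖ) B 1

@[simp] lemma jR_apply (b : B) : jR k B b = (1 : B ⊗[k] Bᵐᵒᵖ) ⊗ₜ b := rfl

/-- the half-comultiplied shuffle map entering the sandwich -/
def rr : ((B ⊗[k] B) ⊗[k] (B ⊗[k] B)) →ₗ[k]
    (((B ⊗[k] Bᵐᵒᵖ) ⊗[k] B) ⊗[k] ((B ⊗[k] Bᵐᵒᵖ) ⊗[k] B)) :=
  (TensorProduct.map ((eE k B).toLinearMap) (jR k B)) ∘ₗ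
    (TensorProduct.assoc k (B ⊗[k] B) B B).symm.toLinearMap ∘ₗ
    (TensorProduct.tensorTensorTensorComm k B B B B).toLinearMap

@[simp] lemma rr_tmul (a b c d : B) :
    rr k B ((a ⊗ₜ b) ⊗ₜ (c ⊗ₜ d)) =
      ((a ⊗ₜ MulOpposite.op c) ⊗ₜ b) ⊗ₜ ((1 : B ⊗[k] Bᵐᵒᵖ) ⊗ₜ d) := by
  simp [rr]

def cC : (B ⊗[k] B) →ₗ[k]
    (((B ⊗[k] Bᵐᵒᵖ) ⊗[k] B) ⊗[k] ((B ⊗[k] Bᵐᵒᵖ) ⊗[k] B)) :=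
  rr k B ∘ₗ TensorProduct.map Coalgebra.comul Coalgebra.comul

lemma cC_tmul (u v : B) :
    cC k B (u ⊗ₜ v) = rr k B (Coalgebra.comul u ⊗ₜ Coalgebra.comul v) := rfl

lemma unitR_apply (z : B ⊗[k] B) : unitR k B z = z ⊗ₜ (1 : B) := by
  simp [unitR, Algebra.linearMap_apply]

/-- core multiplicativity identity -/
lemma L1 (U V X Y : B ⊗[k] B) :
    eE k B (FF k B ((U * X) ⊗ₜ (Y * V))) =
      SL k B (rr k B (U ⊗ₜ V)) (eE k B (FF k B (X ⊗ₜ Y))) := by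
  induction U using TensorProduct.induction_on with
  | zero => simp
  | add U1 U2 h1 h2 =>
      simp only [tp_add_mul, add_tmul, map_add, LinearMap.add_apply, h1, h2]
  | tmul u1 u2 =>
    induction V using TensorProduct.induction_on with
    | zero => simp
    | add V1 V2 h1 h2 =>
        simp only [tp_mul_add, tmul_add, map_add, LinearMap.add_apply, h1, h2]
    | tmul v1 v2 =>
      induction X using TensorProduct.induction_on with
      | zero => simp
      | add X1 X2 h1 h2 =>
          simp only [tp_mul_add, add_tmul, tmul_add, map_add, LinearMap.add_apply, h1, h2]
      | tmul x1 x2 =>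
        induction Y using TensorProduct.induction_on with
        | zero => simp
        | add Y1 Y2 h1 h2 =>
            simp only [tp_add_mul, add_tmul, tmul_add, map_add, LinearMap.add_apply, h1, h2]
        | tmul y1 y2 =>
            simp [Algebra.TensorProduct.tmul_mul_tmul, mul_assoc]

lemma L2core (U V : B ⊗[k] B) (x y : B) :
    SL k B (rr k B (U ⊗ₜ V)) (eE k B ((x ⊗ₜ y) ⊗ₜ (1 : B))) =
      eE k B (FF k B (U ⊗ₜ V)) * eE k B ((x ⊗ₜ y) ⊗ₜ (1 : B)) := by
  induction U using TensorProduct.induction_on with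
  | zero => simp
  | add U1 U2 h1 h2 =>
      simp only [add_tmul, map_add, LinearMap.add_apply, tp_add_mul, h1, h2]
  | tmul u1 u2 =>
    induction V using TensorProduct.induction_on with
    | zero => simp
    | add V1 V2 h1 h2 =>
        simp only [tmul_add, map_add, LinearMap.add_apply, tp_add_mul, h1, h2]
    | tmul v1 v2 =>
        simp [Algebra.TensorProduct.tmul_mul_tmul, mul_assoc]

lemma L2 (z w : B ⊗[k] B) :
    SL k B (cC k B z) (eE k B (unitR k B w)) =
      eE k B (coact k B z) * eE k B (unitR k B w) := by
  induction w using TensorProduct.induction_on with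
  | zero => simp
  | add w1 w2 h1 h2 => simp only [map_add, tp_mul_add, h1, h2]
  | tmul x y =>
    induction z using TensorProduct.induction_on with
    | zero => simp
    | add z1 z2 h1 h2 => simp only [map_add, LinearMap.add_apply, tp_add_mul, h1, h2]
    | tmul u v =>
        rw [cC_tmul, coact_tmul, unitR_apply]
        exact L2core k B _ _ x y

lemma L3 (z w : B ⊗[k] B) :
    eE k B (unitR k B ((fM k B).symm (fM k B z * fM k B w))) =
      eE k B (unitR k B z) * eE k B (unitR k B w) := by
  induction z using TensorProduct.induction_on with
  | zero => simp
  | add z1 z2 h1 h2 => simp only [map_add, tp_add_mul, h1, h2]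
  | tmul u v =>
    induction w using TensorProduct.induction_on with
    | zero => simp
    | add w1 w2 h1 h2 => simp only [map_add, tp_mul_add, h1, h2]
    | tmul x y =>
        simp [unitR_apply, Algebra.TensorProduct.tmul_mul_tmul]

lemma keyMul (z w : B ⊗[k] B) :
    eE k B (coact k B ((fM k B).symm (fM k B z * fM k B w))) =
      SL k B (cC k B z) (eE k B (coact k B w)) := by
  induction z using TensorProduct.induction_on with
  | zero => simp
  | add z1 z2 h1 h2 => simp only [map_add, tp_add_mul, LinearMap.add_apply, h1, h2]
  | tmul u v =>
    induction w using TensorProduct.induction_on with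
    | zero => simp
    | add w1 w2 h1 h2 => simp only [map_add, tp_mul_add, h1, h2]
    | tmul x y =>
        have h : (fM k B).symm (fM k B (u ⊗ₜ v) * fM k B (x ⊗ₜ y)) =
            (u * x) ⊗ₜ[k] (y * v) := by
          simp [Algebra.TensorProduct.tmul_mul_tmul]
        rw [h, coact_tmul, coact_tmul, Bialgebra.comul_mul, Bialgebra.comul_mul,
          cC_tmul]
        exact L1 k B _ _ _ _

/-- the map Σ x' ⊗ y' ⊗ c ↦ Σ ε(x')ε(y')·c -/
def Phi : ((B ⊗[k] B) ⊗[k] B) →ₗ[k] B :=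
  (TensorProduct.lid k B).toLinearMap ∘ₗ
    TensorProduct.map (LinearMap.mul' k k ∘ₗ
      TensorProduct.map Coalgebra.counit Coalgebra.counit) LinearMap.id

@[simp] lemma Phi_tmul (x y c : B) :
    Phi k B ((x ⊗ₜ y) ⊗ₜ c) =
      (Coalgebra.counit (R := k) x * Coalgebra.counit (R := k) y) • c := by
  simp [Phi]

lemma qB0_comul (x : B) : qB0 k B (Coalgebra.comul x) = x := by
  have h := Coalgebra.rTensor_counit_comul (R := k) x
  rw [LinearMap.rTensor] at h
  simp [qB0, h]

lemma P3core (X Y : B ⊗[k] B) :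
    Phi k B (FF k B (X ⊗ₜ Y)) = qB0 k B X * qB0 k B Y := by
  induction X using TensorProduct.induction_on with
  | zero => simp
  | add X1 X2 h1 h2 => simp only [add_tmul, map_add, add_mul, h1, h2]
  | tmul x1 x2 =>
    induction Y using TensorProduct.induction_on with
    | zero => simp
    | add Y1 Y2 h1 h2 => simp only [tmul_add, map_add, mul_add, h1, h2]
    | tmul y1 y2 =>
        simp [qB0, smul_mul_assoc, mul_smul_comm, mul_comm, smul_smul]

lemma P3a (z : B ⊗[k] B) : Phi k B (coact k B z) = LinearMap.mul' k B z := by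
  induction z using TensorProduct.induction_on with
  | zero => simp
  | add z1 z2 h1 h2 => simp only [map_add, h1, h2]
  | tmul x y =>
      rw [coact_tmul, P3core, qB0_comul, qB0_comul]
      simp

lemma P3b (z : B ⊗[k] B) :
    Phi k B (unitR k B z) =
      (Algebra.linearMap k B ∘ₗ LinearMap.mul' k k ∘ₗ
        TensorProduct.map Coalgebra.counit Coalgebra.counit) z := by
  rw [unitR_apply]
  induction z using TensorProduct.induction_on with
  | zero => simp
  | add z1 z2 h1 h2 => simp only [add_tmul, map_add, h1, h2]
  | tmul x y => simp [Algebra.algebraMap_eq_smul_one]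

end Aux

theorem stmt4 (k B : Type*) [Field k] [Ring B] [Bialgebra k B] :
    ((1 : B) ⊗ₜ[k] (1 : B) ∈ coinv k B) ∧
    (∀ z ∈ coinv k B, ∀ w ∈ coinv k B,
      (TensorProduct.congr (LinearEquiv.refl k B) (MulOpposite.opLinearEquiv k)).symm
        ((TensorProduct.congr (LinearEquiv.refl k B) (MulOpposite.opLinearEquiv k)) z *
          (TensorProduct.congr (LinearEquiv.refl k B) (MulOpposite.opLinearEquiv k)) w)
        ∈ coinv k B) ∧
    (∀ z ∈ coinv k B,
      LinearMap.mul' k B z =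
        (Algebra.linearMap k B ∘ₗ LinearMap.mul' k k ∘ₗ
          TensorProduct.map Coalgebra.counit Coalgebra.counit) z) := by
  refine ⟨?_, ?_, ?_⟩
  · rw [coinv, LinearMap.mem_eqLocus, coact_tmul, unitR_apply]
    simp [Algebra.TensorProduct.one_def]
  · intro z hz w hw
    rw [coinv, LinearMap.mem_eqLocus] at hz hw ⊢
    show coact k B ((fM k B).symm (fM k B z * fM k B w)) =
      unitR k B ((fM k B).symm (fM k B z * fM k B w))
    apply (eE k B).injective
    rw [keyMul, hw, L2, hz, L3]
  · intro z hz
    rw [coinv, LinearMap.mem_eqLocus] at hz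
    rw [← P3a, hz, P3b]
end
end

section
/- Let B be a bialgebra. The map i_B : B → B ⊘ B, b ↦ b ⊘ 1, is surjective if and only if there exists a linear endomorphism S of B such that 1 ⊘ y = S(y) ⊘ 1 in B ⊘ B for every y ∈ B, if and only if for every x, y ∈ B there exists y' ∈ B with x ⊘ y = x y' ⊘ 1. -/
noncomputable section
open TensorProduct LinearMap

/-- Left multiplication preserves the relation submodule. -/
theorem oslashRel_mul_mem (k B : Type*) [CommRing k] [Ring B] [Bialgebra k B]
    (w : B ⊗[k] B) {z : B ⊗[k] B} (hz : z ∈ oslashRel k B) :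
    w * z ∈ oslashRel k B := by
  have hmap : Submodule.map (LinearMap.mulLeft k w) (oslashRel k B) ≤ oslashRel k B := by
    rw [oslashRel, Submodule.map_span, Submodule.span_le]
    rintro _ ⟨_, ⟨m, b, hb, rfl⟩, rfl⟩
    exact Submodule.subset_span ⟨w * m, b, hb, (mul_assoc w m _).symm⟩
  exact hmap ⟨z, hz, rfl⟩

theorem stmt5 (k B : Type*) [Field k] [Ring B] [Bialgebra k B] :
    (Function.Surjective (iB k B) ↔
      ∃ S : B →ₗ[k] B, ∀ y : B,
        omk k ((1 : B) ⊗ₜ[k] y) = omk k (S y ⊗ₜ[k] (1 : B))) ∧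
    (Function.Surjective (iB k B) ↔
      ∀ x y : B, ∃ y' : B,
        omk k (x ⊗ₜ[k] y) = omk k ((x * y') ⊗ₜ[k] (1 : B))) := by
  have h1 : Function.Surjective (iB k B) →
      ∃ S : B →ₗ[k] B, ∀ y : B,
        omk k ((1 : B) ⊗ₜ[k] y) = omk k (S y ⊗ₜ[k] (1 : B)) := by
    intro hs
    obtain ⟨g, hg⟩ := (iB k B).exists_rightInverse_of_surjective
      (LinearMap.range_eq_top.mpr hs)
    refine ⟨g ∘ₗ ((oslashRel k B).mkQ ∘ₗ TensorProduct.mk k B B 1), fun y => ?_⟩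
    have := congrArg (fun f : Oslash k B →ₗ[k] Oslash k B =>
      f (omk k ((1 : B) ⊗ₜ[k] y))) hg
    simpa [iB, omk] using this.symm
  have h2 : (∃ S : B →ₗ[k] B, ∀ y : B,
        omk k ((1 : B) ⊗ₜ[k] y) = omk k (S y ⊗ₜ[k] (1 : B))) →
      ∀ x y : B, ∃ y' : B,
        omk k (x ⊗ₜ[k] y) = omk k ((x * y') ⊗ₜ[k] (1 : B)) := by
    rintro ⟨S, hS⟩ x y
    refine ⟨S y, ?_⟩
    have hrel : (1 : B) ⊗ₜ[k] y - S y ⊗ₜ[k] (1 : B) ∈ oslashRel k B :=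
      (Submodule.Quotient.eq _).mp (hS y)
    have := oslashRel_mul_mem k B (x ⊗ₜ[k] (1 : B)) hrel
    have heq : (x ⊗ₜ[k] (1 : B)) * ((1 : B) ⊗ₜ[k] y - S y ⊗ₜ[k] (1 : B))
        = x ⊗ₜ[k] y - (x * S y) ⊗ₜ[k] (1 : B) := by
      rw [mul_sub]
      simp [Algebra.TensorProduct.tmul_mul_tmul]
    rw [heq] at this
    exact (Submodule.Quotient.eq _).mpr this
  have h3 : (∀ x y : B, ∃ y' : B,
        omk k (x ⊗ₜ[k] y) = omk k ((x * y') ⊗ₜ[k] (1 : B))) →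
      Function.Surjective (iB k B) := by
    intro h z
    obtain ⟨t, rfl⟩ := Submodule.Quotient.mk_surjective _ z
    have : ∀ t : B ⊗[k] B, ∃ b : B, iB k B b = omk k t := by
      intro t
      induction t with
      | zero => exact ⟨0, by simp [omk]⟩
      | tmul x y =>
        obtain ⟨y', hy'⟩ := h x y
        exact ⟨x * y', by simp [iB, omk, hy'.symm]⟩
      | add a b ha hb =>
        obtain ⟨u, hu⟩ := ha
        obtain ⟨v, hv⟩ := hb
        exact ⟨u + v, by simp [omk, Submodule.Quotient.mk_add, ← hu, ← hv]⟩
    exact this t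
  exact ⟨⟨h1, fun h => h3 (h2 h)⟩, ⟨fun hs => h2 (h1 hs), h3⟩⟩
end
end

section
/- Let B be a bialgebra for which i_B : B → B ⊘ B, b ↦ b ⊘ 1, is surjective, and let S be a linear endomorphism of B with 1 ⊘ b = S(b) ⊘ 1 for all b. Then for all a, b ∈ B: (1) S(ab) − S(b)S(a) ∈ ker(i_B); (2) a₁S(a₂) − ε(a)1 ∈ ker(i_B); (3) S(a₂) ⊗ S(a₁) − S(a)₁ ⊗ S(a)₂ ∈ ker(i_B ⊗ i_B). -/
noncomputable section
open TensorProduct LinearMap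

/-! ### Auxiliary lemmas for `stmt6` -/

section St6Aux
variable {k B : Type*} [CommRing k] [Ring B] [Bialgebra k B]

lemma st6_mem_rel (m : B ⊗[k] B) (b : B) (hb : Coalgebra.counit (R := k) b = 0) :
    m * Coalgebra.comul b ∈ oslashRel k B :=
  Submodule.subset_span ⟨m, b, hb, rfl⟩

lemma st6_ideal (w : B ⊗[k] B) {z : B ⊗[k] B} (hz : z ∈ oslashRel k B) :
    w * z ∈ oslashRel k B := by
  induction hz using Submodule.span_induction with
  | mem x hx =>
      obtain ⟨m, b, hb, rfl⟩ := hx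
      rw [← mul_assoc]
      exact st6_mem_rel _ _ hb
  | zero => simp [oslashRel]
  | add x y _ _ hx hy => rw [mul_add]; exact add_mem hx hy
  | smul c x _ hx => rw [mul_smul_comm]; exact Submodule.smul_mem _ _ hx

lemma st6_hL (m : B ⊗[k] B) (c : B) :
    (oslashRel k B).mkQ (m * Coalgebra.comul c)
      = Coalgebra.counit (R := k) c • (oslashRel k B).mkQ m := by
  simp only [Submodule.mkQ_apply]
  rw [show (Coalgebra.counit (R := k) c • (omk k m : Oslash k B))
      = omk k (Coalgebra.counit (R := k) c • m) from rfl, Submodule.Quotient.eq]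
  have h : m * Coalgebra.comul c - Coalgebra.counit (R := k) c • m
      = m * Coalgebra.comul (c - Coalgebra.counit (R := k) c • (1 : B)) := by
    simp [map_sub, map_smul, mul_sub, mul_smul_comm]
  rw [h]
  exact st6_mem_rel _ _ (by simp)

lemma st6_congr (w z z' : B ⊗[k] B)
    (h : (oslashRel k B).mkQ z = (oslashRel k B).mkQ z') :
    (oslashRel k B).mkQ (w * z) = (oslashRel k B).mkQ (w * z') := by
  simp only [Submodule.mkQ_apply] at h ⊢
  rw [Submodule.Quotient.eq] at h ⊢
  rw [← mul_sub]
  exact st6_ideal w h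

variable (S : B →ₗ[k] B)
variable (hS : ∀ b : B, (oslashRel k B).mkQ ((1 : B) ⊗ₜ[k] b)
    = (oslashRel k B).mkQ (S b ⊗ₜ[k] (1 : B)))

include hS in
lemma st6_A (x y c : B) :
    (oslashRel k B).mkQ (x ⊗ₜ[k] (y * c)) = (oslashRel k B).mkQ ((x * S c) ⊗ₜ[k] y) := by
  have h := st6_congr (x ⊗ₜ[k] y) ((1 : B) ⊗ₜ[k] c) (S c ⊗ₜ[k] (1 : B)) (hS c)
  rw [Algebra.TensorProduct.tmul_mul_tmul, Algebra.TensorProduct.tmul_mul_tmul] at h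
  simpa using h

include hS in
lemma st6_F2 (p w d : B) (rp : Coalgebra.Repr k d (B × B)) :
    ∑ i ∈ rp.index, (oslashRel k B).mkQ ((p * rp.left i * S (rp.right i)) ⊗ₜ[k] w)
      = Coalgebra.counit (R := k) d • (oslashRel k B).mkQ (p ⊗ₜ[k] w) := by
  have h1 : ∀ i ∈ rp.index,
      (oslashRel k B).mkQ ((p * rp.left i * S (rp.right i)) ⊗ₜ[k] w)
        = (oslashRel k B).mkQ ((p * rp.left i) ⊗ₜ[k] (w * rp.right i)) :=
    fun i _ => (st6_A S hS (p * rp.left i) w (rp.right i)).symm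
  rw [Finset.sum_congr rfl h1]
  have h2 : ∑ i ∈ rp.index, (oslashRel k B).mkQ ((p * rp.left i) ⊗ₜ[k] (w * rp.right i))
      = (oslashRel k B).mkQ ((p ⊗ₜ[k] w) * Coalgebra.comul d) := by
    rw [← rp.eq, Finset.mul_sum]
    rw [show (∑ i ∈ rp.index, (p ⊗ₜ[k] w) * (rp.left i ⊗ₜ[k] rp.right i))
        = ∑ i ∈ rp.index, ((p * rp.left i) ⊗ₜ[k] (w * rp.right i)) by
      refine Finset.sum_congr rfl fun i _ => ?_
      rw [Algebra.TensorProduct.tmul_mul_tmul]]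
    exact (map_sum (oslashRel k B).mkQ _ _).symm
  rw [h2, st6_hL]

lemma st6_pres (c : B) (r : Coalgebra.Repr k c (B × B))
    (r1 : ∀ i : (B × B), Coalgebra.Repr k (r.left i) (B × B))
    (r2 : ∀ (i : (B × B)) (j : (B × B)), Coalgebra.Repr k ((r1 i).right j) (B × B)) :
    TensorProduct.map (Coalgebra.comul (R := k)) (Coalgebra.comul (R := k))
        (Coalgebra.comul (R := k) c)
      = ∑ i ∈ r.index, ∑ j ∈ (r1 i).index, ∑ t ∈ (r2 i j).index,
        (((r1 i).left j) ⊗ₜ[k] ((r2 i j).left t)) ⊗ₜ[k]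
          (((r2 i j).right t) ⊗ₜ[k] (r.right i)) := by
  have h2 : ∀ i : (B × B),
      (Coalgebra.comul (R := k)).rTensor B (Coalgebra.comul (R := k) (r.left i))
        = ∑ j ∈ (r1 i).index, ∑ t ∈ (r2 i j).index,
            (((r1 i).left j) ⊗ₜ[k] ((r2 i j).left t)) ⊗ₜ[k] ((r2 i j).right t) := by
    intro i
    rw [← Coalgebra.coassoc_symm_apply, ← (r1 i).eq, map_sum, map_sum]
    refine Finset.sum_congr rfl fun j _ => ?_
    rw [lTensor_tmul, ← (r2 i j).eq, tmul_sum, map_sum]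
    refine Finset.sum_congr rfl fun t _ => ?_
    rw [assoc_symm_tmul]
  have hA : ∀ i : (B × B),
      (Coalgebra.comul (R := k)).rTensor B (Coalgebra.comul (R := k) (r.left i))
        = ∑ j ∈ (r1 i).index,
            (Coalgebra.comul (R := k) ((r1 i).left j)) ⊗ₜ[k] ((r1 i).right j) := by
    intro i
    rw [← (r1 i).eq, map_sum]
    exact Finset.sum_congr rfl fun j _ => rfl
  have h3 : ∀ i : (B × B),
      ∑ j ∈ (r1 i).index,
          (Coalgebra.comul (R := k) ((r1 i).left j)) ⊗ₜ[k] (((r1 i).right j) ⊗ₜ[k] (r.right i))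
        = ∑ j ∈ (r1 i).index, ∑ t ∈ (r2 i j).index,
            (((r1 i).left j) ⊗ₜ[k] ((r2 i j).left t)) ⊗ₜ[k]
              (((r2 i j).right t) ⊗ₜ[k] (r.right i)) := by
    intro i
    have hh := congrArg (((TensorProduct.mk k B B).flip (r.right i)).lTensor (B ⊗[k] B))
      ((hA i).symm.trans (h2 i))
    simp only [map_sum, lTensor_tmul, TensorProduct.mk_apply, flip_apply] at hh
    exact hh
  calc TensorProduct.map (Coalgebra.comul (R := k)) (Coalgebra.comul (R := k))
        (Coalgebra.comul (R := k) c)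
      = (Coalgebra.comul (R := k)).rTensor (B ⊗[k] B)
          ((Coalgebra.comul (R := k)).lTensor B (Coalgebra.comul (R := k) c)) := by
        rw [← LinearMap.rTensor_comp_lTensor, LinearMap.comp_apply]
    _ = (Coalgebra.comul (R := k)).rTensor (B ⊗[k] B)
          ((TensorProduct.assoc k B B B)
            ((Coalgebra.comul (R := k)).rTensor B (Coalgebra.comul (R := k) c))) := by
        rw [Coalgebra.coassoc_apply]
    _ = ∑ i ∈ r.index, ∑ j ∈ (r1 i).index,
          (Coalgebra.comul (R := k) ((r1 i).left j)) ⊗ₜ[k]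
            (((r1 i).right j) ⊗ₜ[k] (r.right i)) := by
        rw [← r.eq, map_sum, map_sum, map_sum]
        refine Finset.sum_congr rfl fun i _ => ?_
        rw [rTensor_tmul, ← (r1 i).eq, sum_tmul, map_sum, map_sum]
        refine Finset.sum_congr rfl fun j _ => ?_
        rw [assoc_tmul, rTensor_tmul]
    _ = _ := Finset.sum_congr rfl fun i _ => h3 i

include hS in
set_option maxHeartbeats 1000000 in
lemma st6_hC (c : B) (P : (B ⊗[k] B) ⊗[k] (B ⊗[k] B)) :
    TensorProduct.map (oslashRel k B).mkQ (oslashRel k B).mkQ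
        ((TensorProduct.tensorTensorTensorComm k B B B B)
          ((TensorProduct.map LinearMap.id (TensorProduct.comm k B B).toLinearMap)
            (P * (TensorProduct.map (Coalgebra.comul (R := k)) (Coalgebra.comul (R := k))
              (Coalgebra.comul (R := k) c)))))
      = Coalgebra.counit (R := k) c •
        TensorProduct.map (oslashRel k B).mkQ (oslashRel k B).mkQ
          ((TensorProduct.tensorTensorTensorComm k B B B B)
            ((TensorProduct.map LinearMap.id (TensorProduct.comm k B B).toLinearMap) P)) := by
  induction P using TensorProduct.induction_on with
  | zero => simp
  | add P₁ P₂ h₁ h₂ =>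
      simp only [add_mul, map_add, smul_add]; rw [h₁, h₂]
  | tmul m n =>
    induction m using TensorProduct.induction_on with
    | zero => simp [zero_tmul]
    | add m₁ m₂ h₁ h₂ =>
        simp only [add_tmul, add_mul, map_add, smul_add]; rw [h₁, h₂]
    | tmul p q =>
      induction n using TensorProduct.induction_on with
      | zero => simp [tmul_zero]
      | add n₁ n₂ h₁ h₂ =>
          simp only [tmul_add, add_mul, map_add, smul_add]; rw [h₁, h₂]
      | tmul u v =>
        obtain ⟨rc⟩ : Nonempty (Coalgebra.Repr k c (B × B)) := ⟨Coalgebra.Repr.arbitrary k c⟩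
        set r1 : ∀ i : (B × B), Coalgebra.Repr k (rc.left i) (B × B) :=
          fun i => Coalgebra.Repr.arbitrary k (rc.left i) with hr1
        set r2 : ∀ (i : (B × B)) (j : (B × B)), Coalgebra.Repr k ((r1 i).right j) (B × B) :=
          fun i j => Coalgebra.Repr.arbitrary k ((r1 i).right j) with hr2
        rw [st6_pres c rc r1 r2]
        simp only [Finset.mul_sum, map_sum]
        have hterm : ∀ (i : (B × B)) (j : (B × B)) (t : (B × B)),
            TensorProduct.map (oslashRel k B).mkQ (oslashRel k B).mkQ
              ((TensorProduct.tensorTensorTensorComm k B B B B)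
                ((TensorProduct.map LinearMap.id (TensorProduct.comm k B B).toLinearMap)
                  (((p ⊗ₜ[k] q) ⊗ₜ[k] (u ⊗ₜ[k] v)) *
                    ((((r1 i).left j) ⊗ₜ[k] ((r2 i j).left t)) ⊗ₜ[k]
                      (((r2 i j).right t) ⊗ₜ[k] (rc.right i))))))
              = (oslashRel k B).mkQ ((p * (r1 i).left j * S (rc.right i)) ⊗ₜ[k] v) ⊗ₜ[k]
                (oslashRel k B).mkQ ((q * (r2 i j).left t * S ((r2 i j).right t)) ⊗ₜ[k] u) := by
          intro i j t
          simp only [Algebra.TensorProduct.tmul_mul_tmul, TensorProduct.map_tmul,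
            LinearMap.id_coe, id_eq, LinearEquiv.coe_coe, TensorProduct.comm_tmul,
            TensorProduct.tensorTensorTensorComm_tmul]
          rw [st6_A S hS (p * (r1 i).left j) v (rc.right i),
            st6_A S hS (q * (r2 i j).left t) u ((r2 i j).right t)]
        simp only [hterm]
        have hstep1 : ∀ (i : (B × B)) (j : (B × B)),
            ∑ t ∈ (r2 i j).index,
              ((oslashRel k B).mkQ ((p * (r1 i).left j * S (rc.right i)) ⊗ₜ[k] v) ⊗ₜ[k]
                (oslashRel k B).mkQ ((q * (r2 i j).left t * S ((r2 i j).right t)) ⊗ₜ[k] u))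
            = Coalgebra.counit (R := k) ((r1 i).right j) •
                ((oslashRel k B).mkQ ((p * (r1 i).left j * S (rc.right i)) ⊗ₜ[k] v) ⊗ₜ[k]
                  (oslashRel k B).mkQ (q ⊗ₜ[k] u)) := by
          intro i j
          rw [← TensorProduct.tmul_sum, st6_F2 S hS q u ((r1 i).right j) (r2 i j),
            TensorProduct.tmul_smul]
        simp only [hstep1]
        have hcount : ∀ i : (B × B),
            ∑ j ∈ (r1 i).index,
              Coalgebra.counit (R := k) ((r1 i).right j) • (r1 i).left j = rc.left i := by
          intro i
          have h := congrArg (TensorProduct.rid k B) (Coalgebra.sum_tmul_counit_eq (r1 i))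
          simp only [map_sum, TensorProduct.rid_tmul, one_smul] at h
          exact h
        have hstep2 : ∀ i : (B × B),
            ∑ j ∈ (r1 i).index,
              Coalgebra.counit (R := k) ((r1 i).right j) •
                ((oslashRel k B).mkQ ((p * (r1 i).left j * S (rc.right i)) ⊗ₜ[k] v) ⊗ₜ[k]
                  (oslashRel k B).mkQ (q ⊗ₜ[k] u))
            = (oslashRel k B).mkQ ((p * rc.left i * S (rc.right i)) ⊗ₜ[k] v) ⊗ₜ[k]
                (oslashRel k B).mkQ (q ⊗ₜ[k] u) := by
          intro i
          have hL : ∀ a : B,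
              (oslashRel k B).mkQ ((p * a * S (rc.right i)) ⊗ₜ[k] v) ⊗ₜ[k]
                  (oslashRel k B).mkQ (q ⊗ₜ[k] u)
                = (((TensorProduct.mk k (Oslash k B) (Oslash k B)).flip
                      ((oslashRel k B).mkQ (q ⊗ₜ[k] u))) ∘ₗ
                    (oslashRel k B).mkQ ∘ₗ ((TensorProduct.mk k B B).flip v) ∘ₗ
                    (LinearMap.mulRight k (S (rc.right i))) ∘ₗ (LinearMap.mulLeft k p)) a :=
            fun a => rfl
          simp only [hL, ← map_smul, ← map_sum]
          rw [hcount i]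
        simp only [hstep2]
        rw [← TensorProduct.sum_tmul, st6_F2 S hS p v c rc, ← TensorProduct.smul_tmul']
        simp only [Algebra.TensorProduct.tmul_mul_tmul, TensorProduct.map_tmul,
          LinearMap.id_coe, id_eq, LinearEquiv.coe_coe, TensorProduct.comm_tmul,
          TensorProduct.tensorTensorTensorComm_tmul]

end St6Aux

theorem stmt6 (k B : Type*) [Field k] [Ring B] [Bialgebra k B]
    (hsurj : Function.Surjective (iB k B))
    (S : B →ₗ[k] B)
    (hS : ∀ b : B, omk k ((1 : B) ⊗ₜ[k] b) = omk k (S b ⊗ₜ[k] (1 : B))) :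
    ∀ a b : B,
      iB k B (S (a * b) - S b * S a) = 0 ∧
      iB k B (LinearMap.mul' k B
        ((TensorProduct.map LinearMap.id S) (Coalgebra.comul (R := k) a))
          - Coalgebra.counit (R := k) a • (1 : B)) = 0 ∧
      (TensorProduct.map (iB k B) (iB k B))
        ((TensorProduct.map S S) ((TensorProduct.comm k B B) (Coalgebra.comul (R := k) a))
          - Coalgebra.comul (R := k) (S a)) = 0 := by
  intro a b
  have hS' : ∀ c : B, (oslashRel k B).mkQ ((1 : B) ⊗ₜ[k] c)
      = (oslashRel k B).mkQ (S c ⊗ₜ[k] (1 : B)) := fun c => by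
    simpa [Submodule.mkQ_apply] using hS c
  have hiB : ∀ x : B, iB k B x = (oslashRel k B).mkQ (x ⊗ₜ[k] (1 : B)) := fun x => rfl
  refine ⟨?_, ?_, ?_⟩
  · -- (1) anti-multiplicativity
    rw [map_sub, sub_eq_zero, hiB, hiB]
    calc (oslashRel k B).mkQ (S (a * b) ⊗ₜ[k] (1 : B))
        = (oslashRel k B).mkQ ((1 : B) ⊗ₜ[k] (a * b)) := (hS' (a * b)).symm
      _ = (oslashRel k B).mkQ (((1 : B) * S b) ⊗ₜ[k] a) := st6_A S hS' 1 a b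
      _ = (oslashRel k B).mkQ ((S b) ⊗ₜ[k] ((1 : B) * a)) := by rw [one_mul, one_mul]
      _ = (oslashRel k B).mkQ ((S b * S a) ⊗ₜ[k] (1 : B)) := st6_A S hS' (S b) 1 a
  · -- (2) convolution inverse property
    rw [map_sub, sub_eq_zero]
    obtain ⟨ra⟩ : Nonempty (Coalgebra.Repr k a (B × B)) := ⟨Coalgebra.Repr.arbitrary k a⟩
    have h1 : LinearMap.mul' k B
        ((TensorProduct.map LinearMap.id S) (Coalgebra.comul (R := k) a))
        = ∑ i ∈ ra.index, ra.left i * S (ra.right i) := by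
      rw [← ra.eq, map_sum, map_sum]
      refine Finset.sum_congr rfl fun i _ => ?_
      simp
    rw [h1, hiB, hiB]
    have h2 : (∑ i ∈ ra.index, ra.left i * S (ra.right i)) ⊗ₜ[k] (1 : B)
        = ∑ i ∈ ra.index, (((1 : B) * ra.left i * S (ra.right i)) ⊗ₜ[k] (1 : B)) := by
      rw [TensorProduct.sum_tmul]
      exact Finset.sum_congr rfl fun i _ => by rw [one_mul]
    rw [h2, map_sum, st6_F2 S hS' 1 1 a ra]
    rw [show (Coalgebra.counit (R := k) a • (1 : B)) ⊗ₜ[k] (1 : B)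
        = Coalgebra.counit (R := k) a • ((1 : B) ⊗ₜ[k] (1 : B)) from by
      rw [TensorProduct.smul_tmul']]
    rw [map_smul]
  · -- (3) anti-comultiplicativity
    set W : (B ⊗[k] B) →ₗ[k] (Oslash k B) ⊗[k] (Oslash k B) :=
      TensorProduct.map (oslashRel k B).mkQ (oslashRel k B).mkQ ∘ₗ
        (TensorProduct.tensorTensorTensorComm k B B B B).toLinearMap ∘ₗ
        (TensorProduct.map LinearMap.id (TensorProduct.comm k B B).toLinearMap) ∘ₗ
        (TensorProduct.map (Coalgebra.comul (R := k)) (Coalgebra.comul (R := k))) with hW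
    have hWapp : ∀ z : B ⊗[k] B, W z
        = TensorProduct.map (oslashRel k B).mkQ (oslashRel k B).mkQ
            ((TensorProduct.tensorTensorTensorComm k B B B B)
              ((TensorProduct.map LinearMap.id (TensorProduct.comm k B B).toLinearMap)
                ((TensorProduct.map (Coalgebra.comul (R := k)) (Coalgebra.comul (R := k)))
                  z))) := fun z => rfl
    have hMapMul : ∀ z₁ z₂ : B ⊗[k] B,
        (TensorProduct.map (Coalgebra.comul (R := k)) (Coalgebra.comul (R := k))) (z₁ * z₂)
          = (TensorProduct.map (Coalgebra.comul (R := k)) (Coalgebra.comul (R := k))) z₁ *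
            (TensorProduct.map (Coalgebra.comul (R := k)) (Coalgebra.comul (R := k))) z₂ := by
      have he : (TensorProduct.map (Coalgebra.comul (R := k)) (Coalgebra.comul (R := k))
          : B ⊗[k] B →ₗ[k] (B ⊗[k] B) ⊗[k] (B ⊗[k] B))
          = (Algebra.TensorProduct.map (Bialgebra.comulAlgHom k B)
              (Bialgebra.comulAlgHom k B)).toLinearMap := by
        apply TensorProduct.ext'
        intro x y
        simp [Algebra.TensorProduct.map_tmul]
      intro z₁ z₂
      rw [he, AlgHom.toLinearMap_apply, AlgHom.toLinearMap_apply, AlgHom.toLinearMap_apply,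
        map_mul]
    have hmain : ∀ (m : B ⊗[k] B) (c : B),
        W (m * Coalgebra.comul c) = Coalgebra.counit (R := k) c • W m := by
      intro m c
      rw [hWapp, hWapp, hMapMul]
      exact st6_hC S hS' c _
    have hW0 : ∀ z ∈ oslashRel k B, W z = 0 := by
      intro z hz
      induction hz using Submodule.span_induction with
      | mem x hx =>
          obtain ⟨m, b', hb', rfl⟩ := hx
          rw [hmain m b', hb', zero_smul]
      | zero => simp
      | add x y _ _ hx hy => rw [map_add, hx, hy, add_zero]
      | smul c x _ hx => rw [map_smul, hx, smul_zero]
    have hdiff : W ((1 : B) ⊗ₜ[k] a) = W (S a ⊗ₜ[k] (1 : B)) := by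
      rw [← sub_eq_zero, ← map_sub]
      exact hW0 _ ((Submodule.Quotient.eq _).mp (hS a))
    obtain ⟨ra⟩ : Nonempty (Coalgebra.Repr k a (B × B)) := ⟨Coalgebra.Repr.arbitrary k a⟩
    obtain ⟨rs⟩ : Nonempty (Coalgebra.Repr k (S a) (B × B)) := ⟨Coalgebra.Repr.arbitrary k (S a)⟩
    have hW1 : W ((1 : B) ⊗ₜ[k] a)
        = (TensorProduct.map (iB k B) (iB k B))
            ((TensorProduct.map S S)
              ((TensorProduct.comm k B B) (Coalgebra.comul (R := k) a))) := by
      rw [hWapp]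
      rw [TensorProduct.map_tmul, Bialgebra.comul_one, Algebra.TensorProduct.one_def]
      conv_lhs => rw [← ra.eq]
      conv_rhs => rw [← ra.eq]
      rw [TensorProduct.tmul_sum]
      simp only [map_sum, TensorProduct.map_tmul, LinearMap.id_coe, id_eq,
        LinearEquiv.coe_coe, TensorProduct.comm_tmul,
        TensorProduct.tensorTensorTensorComm_tmul]
      refine Finset.sum_congr rfl fun i _ => ?_
      rw [hS' (ra.right i), hS' (ra.left i), hiB, hiB]
    have hW2 : W (S a ⊗ₜ[k] (1 : B))
        = (TensorProduct.map (iB k B) (iB k B)) (Coalgebra.comul (R := k) (S a)) := by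
      rw [hWapp]
      rw [TensorProduct.map_tmul, Bialgebra.comul_one, Algebra.TensorProduct.one_def]
      conv_lhs => rw [← rs.eq]
      conv_rhs => rw [← rs.eq]
      rw [TensorProduct.sum_tmul]
      simp only [map_sum, TensorProduct.map_tmul, LinearMap.id_coe, id_eq,
        LinearEquiv.coe_coe, TensorProduct.comm_tmul,
        TensorProduct.tensorTensorTensorComm_tmul]
      refine Finset.sum_congr rfl fun i _ => ?_
      rw [hiB, hiB]
    rw [map_sub, sub_eq_zero, ← hW1, ← hW2]
    exact hdiff
end
end

section
/- Let B be a bialgebra with a left n-antipode S, i.e. S * Id^{*(n+1)} = Id^{*n} in the convolution algebra End_k(B). Then for every y ∈ B one has S(y) ⊘ 1 = 1 ⊘ y in B ⊘ B, and consequently the canonical map i_B : B → B ⊘ B, b ↦ b ⊘ 1, is surjective. -/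
noncomputable section
open TensorProduct LinearMap

namespace Stmt7P
open Coalgebra TensorProduct LinearMap

variable (k B : Type*) [CommRing k] [Ring B] [Bialgebra k B]

lemma rel_mem (m : B ⊗[k] B) (c : B) :
    m * Coalgebra.comul c - Coalgebra.counit (R := k) c • m ∈ oslashRel k B := by
  have h : m * Coalgebra.comul c - Coalgebra.counit (R := k) c • m
      = m * Coalgebra.comul (c - Coalgebra.counit (R := k) c • (1 : B)) := by
    rw [map_sub, map_smul, Bialgebra.comul_one, mul_sub, mul_smul_comm, mul_one]
  rw [h]
  refine Submodule.subset_span ⟨m, _, ?_, rfl⟩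
  simp [smul_eq_mul]

lemma mk_rel (m : B ⊗[k] B) (c : B) :
    Submodule.Quotient.mk (p := oslashRel k B) (m * Coalgebra.comul c)
      = Coalgebra.counit (R := k) c • Submodule.Quotient.mk (p := oslashRel k B) m := by
  rw [← Submodule.Quotient.mk_smul, Submodule.Quotient.eq]
  exact rel_mem k B m c

/-- `c ⊗ v ↦ ε(c) • v`. -/
def epsL : (B ⊗[k] B) →ₗ[k] B :=
  (TensorProduct.lid k B).toLinearMap ∘ₗ (Coalgebra.counit (R := k) (A := B)).rTensor B

@[simp] lemma epsL_tmul (c v : B) : epsL k B (c ⊗ₜ[k] v) = Coalgebra.counit (R := k) c • v := by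
  simp [epsL]

lemma epsL_comul : epsL k B ∘ₗ (Coalgebra.comul (R := k) (A := B)) = LinearMap.id := by
  ext x
  simp [epsL]

/-- `x ⊗ (c ⊗ v) ↦ (x ⊗ v) * Δ c`. -/
def midMul : B ⊗[k] (B ⊗[k] B) →ₗ[k] B ⊗[k] B :=
  LinearMap.mul' k (B ⊗[k] B)
    ∘ₗ (Coalgebra.comul (R := k) (A := B)).lTensor (B ⊗[k] B)
    ∘ₗ (TensorProduct.assoc k B B B).symm.toLinearMap
    ∘ₗ (TensorProduct.comm k B B).toLinearMap.lTensor B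

@[simp] lemma midMul_tmul (x c v : B) :
    midMul k B (x ⊗ₜ[k] (c ⊗ₜ[k] v)) = (x ⊗ₜ[k] v) * Coalgebra.comul c := by
  simp [midMul]

/-- `x ⊗ (c ⊗ v) ↦ ε(c) • (x ⊗ v)`. -/
def midEps : B ⊗[k] (B ⊗[k] B) →ₗ[k] B ⊗[k] B :=
  (epsL k B).lTensor B

@[simp] lemma midEps_tmul (x c v : B) :
    midEps k B (x ⊗ₜ[k] (c ⊗ₜ[k] v)) = Coalgebra.counit (R := k) c • (x ⊗ₜ[k] v) := by
  simp [midEps, tmul_smul]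

lemma mk_midMul (t : B ⊗[k] (B ⊗[k] B)) :
    Submodule.Quotient.mk (p := oslashRel k B) (midMul k B t)
      = Submodule.Quotient.mk (p := oslashRel k B) (midEps k B t) := by
  induction t using TensorProduct.induction_on with
  | zero => simp
  | tmul x s =>
    induction s using TensorProduct.induction_on with
    | zero => simp
    | tmul c v => rw [midMul_tmul, midEps_tmul, mk_rel, Submodule.Quotient.mk_smul]
    | add s₁ s₂ h₁ h₂ =>
      rw [tmul_add, map_add, map_add, Submodule.Quotient.mk_add, Submodule.Quotient.mk_add,
        h₁, h₂]
  | add t₁ t₂ h₁ h₂ =>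
    rw [map_add, map_add, Submodule.Quotient.mk_add, Submodule.Quotient.mk_add, h₁, h₂]

end Stmt7P
namespace Stmt7P
set_option synthInstance.maxHeartbeats 1000000
set_option maxHeartbeats 1000000
set_option linter.dupNamespace false
variable (k B : Type*) [CommRing k] [Ring B] [Bialgebra k B]

/-- `t ↦ Σ g(t₂) * t₁` (before precomposing with comul). -/
def rconv0 (g : B →ₗ[k] B) : (B ⊗[k] B) →ₗ[k] B :=
  LinearMap.mul' k B ∘ₗ TensorProduct.map g LinearMap.id
    ∘ₗ (TensorProduct.comm k B B).toLinearMap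

/-- reverse convolution with the identity: `x ↦ Σ g(x₂) * x₁`. -/
def rconv (g : B →ₗ[k] B) : B →ₗ[k] B :=
  rconv0 k B g ∘ₗ Coalgebra.comul

/-- reverse convolution powers of the identity. -/
def Rv (k B : Type*) [CommRing k] [Ring B] [Bialgebra k B] : ℕ → (B →ₗ[k] B)
  | 0 => convUnit k B B
  | j + 1 => rconv k B (Rv k B j)

/-- `y ↦ Σ y₁ ⊗ (y₂ ⊗ y₃)`. -/
def dd : B →ₗ[k] B ⊗[k] (B ⊗[k] B) :=
  (Coalgebra.comul (R := k) (A := B)).lTensor B ∘ₗ Coalgebra.comul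

/-- `x ⊗ (d ⊗ v) ↦ (f x ⊗ g v) * d`. -/
def theta2 (f g : B →ₗ[k] B) : B ⊗[k] ((B ⊗[k] B) ⊗[k] B) →ₗ[k] B ⊗[k] B :=
  LinearMap.mul' k (B ⊗[k] B)
    ∘ₗ TensorProduct.map (TensorProduct.map f g) LinearMap.id
    ∘ₗ (TensorProduct.assoc k B B (B ⊗[k] B)).symm.toLinearMap
    ∘ₗ (TensorProduct.comm k (B ⊗[k] B) B).toLinearMap.lTensor B

@[simp] lemma theta2_tmul (f g : B →ₗ[k] B) (x v : B) (d : B ⊗[k] B) :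
    theta2 k B f g (x ⊗ₜ[k] (d ⊗ₜ[k] v)) = (f x ⊗ₜ[k] g v) * d := by
  simp [theta2]

lemma midEps_map (f g : B →ₗ[k] B) :
    midEps k B ∘ₗ TensorProduct.map f (TensorProduct.map LinearMap.id g)
      = TensorProduct.map f g ∘ₗ midEps k B := by
  apply TensorProduct.ext'
  intro x t
  induction t using TensorProduct.induction_on with
  | zero => simp
  | tmul c v => simp [tmul_smul]
  | add a b ha hb => simp only [TensorProduct.tmul_add, map_add, LinearMap.comp_apply] at ha hb ⊢; rw [ha, hb]

lemma midEps_dd : midEps k B ∘ₗ dd k B = (Coalgebra.comul (R := k) (A := B)) := by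
  rw [midEps, dd, ← LinearMap.comp_assoc, ← LinearMap.lTensor_comp, epsL_comul,
    LinearMap.lTensor_id, LinearMap.id_comp]

/-- P2 : pointwise form of `midMul ∘ (f ⊗ (id ⊗ g)) = theta2 ∘ (id ⊗ (Δ ⊗ id))`. -/
lemma P2 (f g : B →ₗ[k] B) (u : B ⊗[k] (B ⊗[k] B)) :
    midMul k B (TensorProduct.map f (TensorProduct.map LinearMap.id g) u)
      = theta2 k B f g (((Coalgebra.comul (R := k) (A := B)).rTensor B).lTensor B u) := by
  induction u using TensorProduct.induction_on with
  | zero => simp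
  | tmul x s =>
    induction s using TensorProduct.induction_on with
    | zero => simp
    | tmul c v => simp
    | add a b ha hb => simp only [TensorProduct.tmul_add, map_add] at ha hb ⊢; rw [ha, hb]
  | add a b ha hb => simp only [map_add] at ha hb ⊢; rw [ha, hb]

/-- P3 : coassociativity transport. -/
lemma P3 (t : B ⊗[k] B) :
    ((Coalgebra.comul (R := k) (A := B)).rTensor B).lTensor B
        ((Coalgebra.comul (R := k) (A := B)).lTensor B t)
      = ((TensorProduct.assoc k B B B).symm.toLinearMap).lTensor B
          (((Coalgebra.comul (R := k) (A := B)).lTensor B).lTensor B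
            ((Coalgebra.comul (R := k) (A := B)).lTensor B t)) := by
  induction t using TensorProduct.induction_on with
  | zero => simp
  | tmul x v => simp
  | add a b ha hb => simp only [map_add] at ha hb ⊢; rw [ha, hb]

/-- P1 : associator naturality transport. -/
lemma P1 (p q : (B ⊗[k] B) →ₗ[k] B) (u : B ⊗[k] (B ⊗[k] B)) :
    TensorProduct.map p q
        ((Coalgebra.comul (R := k) (A := B)).lTensor (B ⊗[k] B)
          ((TensorProduct.assoc k B B B).symm u))
      = TensorProduct.map p q
          ((TensorProduct.assoc k B B (B ⊗[k] B)).symm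
            (((Coalgebra.comul (R := k) (A := B)).lTensor B).lTensor B u)) := by
  induction u using TensorProduct.induction_on with
  | zero => simp
  | tmul x s =>
    induction s using TensorProduct.induction_on with
    | zero => simp
    | tmul c v => simp
    | add a b ha hb =>
      simp only [TensorProduct.tmul_add, map_add] at ha hb ⊢; rw [ha, hb]
  | add a b ha hb => simp only [map_add] at ha hb ⊢; rw [ha, hb]

/-- P4 : the two four-fold expressions agree. -/
lemma P4 (f g : B →ₗ[k] B) (w : B ⊗[k] (B ⊗[k] (B ⊗[k] B))) :
    theta2 k B f g (((TensorProduct.assoc k B B B).symm.toLinearMap).lTensor B w)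
      = TensorProduct.map (LinearMap.mul' k B ∘ₗ TensorProduct.map f LinearMap.id)
          (rconv0 k B g)
          ((TensorProduct.assoc k B B (B ⊗[k] B)).symm w) := by
  induction w using TensorProduct.induction_on with
  | zero => simp
  | tmul x s =>
    induction s using TensorProduct.induction_on with
    | zero => simp
    | tmul u s' =>
      induction s' using TensorProduct.induction_on with
      | zero => simp
      | tmul v w' => simp [rconv0, Algebra.TensorProduct.tmul_mul_tmul]
      | add a b ha hb =>
        simp only [TensorProduct.tmul_add, map_add] at ha hb ⊢; rw [ha, hb]
    | add a b ha hb =>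
      simp only [TensorProduct.tmul_add, map_add] at ha hb ⊢; rw [ha, hb]
  | add a b ha hb => simp only [map_add] at ha hb ⊢; rw [ha, hb]

end Stmt7P
namespace Stmt7P
set_option synthInstance.maxHeartbeats 1000000
set_option maxHeartbeats 1000000
set_option linter.dupNamespace false

variable (k B : Type*) [CommRing k] [Ring B] [Bialgebra k B]

/-- The key step: in `B ⊘ B`, one further convolution-by-`id` on the left slot together with
one more reversed leg on the right slot does not change the class. -/
lemma step (f g : B →ₗ[k] B) (y : B) :
    Submodule.Quotient.mk (p := oslashRel k B)
        (TensorProduct.map (conv f LinearMap.id) (rconv k B g) (Coalgebra.comul y))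
      = Submodule.Quotient.mk (p := oslashRel k B)
        (TensorProduct.map f g (Coalgebra.comul y)) := by
  have hsplit : TensorProduct.map (conv f LinearMap.id) (rconv k B g)
      = TensorProduct.map (LinearMap.mul' k B ∘ₗ TensorProduct.map f LinearMap.id)
          (rconv0 k B g)
        ∘ₗ TensorProduct.map (Coalgebra.comul (R := k) (A := B)) Coalgebra.comul := by
    rw [← TensorProduct.map_comp]
    rfl
  have e2 : TensorProduct.map (Coalgebra.comul (R := k) (A := B)) Coalgebra.comul
        (Coalgebra.comul y)
      = (Coalgebra.comul (R := k) (A := B)).lTensor (B ⊗[k] B)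
          ((TensorProduct.assoc k B B B).symm (dd k B y)) := by
    have hmm : ∀ t : B ⊗[k] B,
        (Coalgebra.comul (R := k) (A := B)).lTensor (B ⊗[k] B)
          ((Coalgebra.comul (R := k) (A := B)).rTensor B t)
        = TensorProduct.map Coalgebra.comul Coalgebra.comul t := by
      intro t
      induction t using TensorProduct.induction_on with
      | zero => simp
      | tmul a b => simp
      | add a b ha hb => simp only [map_add] at ha hb ⊢; rw [ha, hb]
    rw [dd, LinearMap.comp_apply, Coalgebra.coassoc_symm_apply]
    exact (hmm (Coalgebra.comul y)).symm
  have e3 : TensorProduct.map (conv f LinearMap.id) (rconv k B g) (Coalgebra.comul y)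
      = midMul k B (TensorProduct.map f (TensorProduct.map LinearMap.id g) (dd k B y)) := by
    rw [hsplit, LinearMap.comp_apply, e2, P1, ← P4, P2]
    congr 1
    rw [dd, LinearMap.comp_apply, P3]
  have e4 : TensorProduct.map f g (Coalgebra.comul y)
      = midEps k B (TensorProduct.map f (TensorProduct.map LinearMap.id g) (dd k B y)) := by
    have h1 := LinearMap.congr_fun (midEps_map k B f g) (dd k B y)
    have h2 := LinearMap.congr_fun (midEps_dd k B) y
    simp only [LinearMap.comp_apply] at h1 h2
    rw [h1, h2]
  rw [e3, e4]
  exact mk_midMul k B _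

lemma conv_assoc (f g h : B →ₗ[k] B) : conv (conv f g) h = conv f (conv g h) := by
  apply LinearMap.ext; intro y
  have key : ∀ u : B ⊗[k] (B ⊗[k] B),
      LinearMap.mul' k B (TensorProduct.map (LinearMap.mul' k B ∘ₗ TensorProduct.map f g) h
        ((TensorProduct.assoc k B B B).symm u))
      = LinearMap.mul' k B
          (TensorProduct.map f (LinearMap.mul' k B ∘ₗ TensorProduct.map g h) u) := by
    intro u
    induction u using TensorProduct.induction_on with
    | zero => simp
    | tmul x s =>
      induction s using TensorProduct.induction_on with
      | zero => simp
      | tmul a b => simp [mul_assoc]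
      | add a b ha hb => simp only [TensorProduct.tmul_add, map_add] at ha hb ⊢; rw [ha, hb]
    | add a b ha hb => simp only [map_add] at ha hb ⊢; rw [ha, hb]
  have e1 : conv (conv f g) h y
      = LinearMap.mul' k B (TensorProduct.map (LinearMap.mul' k B ∘ₗ TensorProduct.map f g) h
          ((Coalgebra.comul (R := k) (A := B)).rTensor B (Coalgebra.comul y))) := by
    have hm : TensorProduct.map (conv f g) h
        = TensorProduct.map (LinearMap.mul' k B ∘ₗ TensorProduct.map f g) h
            ∘ₗ (Coalgebra.comul (R := k) (A := B)).rTensor B := by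
      have : conv f g = (LinearMap.mul' k B ∘ₗ TensorProduct.map f g) ∘ₗ
          (Coalgebra.comul (R := k) (A := B)) := by rw [conv, LinearMap.comp_assoc]
      rw [this, ← LinearMap.map_comp_rTensor]
    rw [conv, LinearMap.comp_apply, LinearMap.comp_apply, hm, LinearMap.comp_apply]
  have e3 : conv f (conv g h) y
      = LinearMap.mul' k B (TensorProduct.map f (LinearMap.mul' k B ∘ₗ TensorProduct.map g h)
          ((Coalgebra.comul (R := k) (A := B)).lTensor B (Coalgebra.comul y))) := by
    have hm : TensorProduct.map f (conv g h)
        = TensorProduct.map f (LinearMap.mul' k B ∘ₗ TensorProduct.map g h)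
            ∘ₗ (Coalgebra.comul (R := k) (A := B)).lTensor B := by
      have : conv g h = (LinearMap.mul' k B ∘ₗ TensorProduct.map g h) ∘ₗ
          (Coalgebra.comul (R := k) (A := B)) := by rw [conv, LinearMap.comp_assoc]
      rw [this, ← LinearMap.map_comp_lTensor]
    rw [conv, LinearMap.comp_apply, LinearMap.comp_apply, hm, LinearMap.comp_apply]
  rw [e1, e3, ← Coalgebra.coassoc_symm_apply, key]

lemma conv_unit_right (f : B →ₗ[k] B) : conv f (convUnit k B B) = f := by
  apply LinearMap.ext; intro y
  have key : ∀ t : B ⊗[k] B,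
      LinearMap.mul' k B (TensorProduct.map f (convUnit k B B) t)
        = (TensorProduct.rid k B) ((f.rTensor k)
            ((Coalgebra.counit (R := k) (A := B)).lTensor B t)) := by
    intro t
    induction t using TensorProduct.induction_on with
    | zero => simp
    | tmul a b =>
      simp [convUnit, Algebra.smul_def, Algebra.commutes]
    | add a b ha hb => simp only [map_add] at ha hb ⊢; rw [ha, hb]
  rw [conv, LinearMap.comp_apply, LinearMap.comp_apply, key, Coalgebra.lTensor_counit_comul]
  simp

lemma conv_unit_left (f : B →ₗ[k] B) : conv (convUnit k B B) f = f := by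
  apply LinearMap.ext; intro y
  have key : ∀ t : B ⊗[k] B,
      LinearMap.mul' k B (TensorProduct.map (convUnit k B B) f t)
        = (TensorProduct.lid k B) ((f.lTensor k)
            ((Coalgebra.counit (R := k) (A := B)).rTensor B t)) := by
    intro t
    induction t using TensorProduct.induction_on with
    | zero => simp
    | tmul a b =>
      simp [convUnit, Algebra.smul_def]
    | add a b ha hb => simp only [map_add] at ha hb ⊢; rw [ha, hb]
  rw [conv, LinearMap.comp_apply, LinearMap.comp_apply, key, Coalgebra.rTensor_counit_comul]
  simp

lemma Rv_one : Rv k B 1 = LinearMap.id := by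
  apply LinearMap.ext; intro x
  have key : ∀ t : B ⊗[k] B,
      rconv0 k B (convUnit k B B) t
        = (TensorProduct.rid k B) ((Coalgebra.counit (R := k) (A := B)).lTensor B t) := by
    intro t
    induction t using TensorProduct.induction_on with
    | zero => simp
    | tmul a b => simp [rconv0, convUnit, Algebra.smul_def]
    | add a b ha hb => simp only [map_add] at ha hb ⊢; rw [ha, hb]
  show rconv0 k B (convUnit k B B) (Coalgebra.comul x) = x
  rw [key, Coalgebra.lTensor_counit_comul]
  simp

lemma map_convUnit_id_comul (y : B) :
    TensorProduct.map (convUnit k B B) LinearMap.id (Coalgebra.comul y)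
      = (1 : B) ⊗ₜ[k] y := by
  have key : ∀ t : B ⊗[k] B,
      TensorProduct.map (convUnit k B B) LinearMap.id t
        = (Algebra.linearMap k B).rTensor B
            ((Coalgebra.counit (R := k) (A := B)).rTensor B t) := by
    intro t
    induction t using TensorProduct.induction_on with
    | zero => simp
    | tmul a b => simp [convUnit]
    | add a b ha hb => simp only [map_add] at ha hb ⊢; rw [ha, hb]
  rw [key, Coalgebra.rTensor_counit_comul]
  simp

lemma map_id_convUnit_comul (f : B →ₗ[k] B) (y : B) :
    TensorProduct.map f (convUnit k B B) (Coalgebra.comul y)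
      = f y ⊗ₜ[k] (1 : B) := by
  have key : ∀ t : B ⊗[k] B,
      TensorProduct.map f (convUnit k B B) t
        = (Algebra.linearMap k B).lTensor B ((f.rTensor k)
            ((Coalgebra.counit (R := k) (A := B)).lTensor B t)) := by
    intro t
    induction t using TensorProduct.induction_on with
    | zero => simp
    | tmul a b => simp [convUnit]
    | add a b ha hb => simp only [map_add] at ha hb ⊢; rw [ha, hb]
  rw [key, Coalgebra.lTensor_counit_comul]
  simp

lemma chainA (f : B →ₗ[k] B) : ∀ (j : ℕ) (y : B),
    Submodule.Quotient.mk (p := oslashRel k B)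
      (TensorProduct.map (conv f (convPow k B j)) (Rv k B j) (Coalgebra.comul y))
    = Submodule.Quotient.mk (p := oslashRel k B) (f y ⊗ₜ[k] (1 : B))
  | 0, y => by
    rw [show convPow k B 0 = convUnit k B B from rfl, conv_unit_right,
      show Rv k B 0 = convUnit k B B from rfl, map_id_convUnit_comul]
  | j + 1, y => by
    have h1 : conv f (convPow k B (j + 1)) = conv (conv f (convPow k B j)) LinearMap.id := by
      rw [show convPow k B (j + 1) = conv (convPow k B j) LinearMap.id from rfl, conv_assoc]
    rw [h1, show Rv k B (j + 1) = rconv k B (Rv k B j) from rfl]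
    exact (step k B (conv f (convPow k B j)) (Rv k B j) y).trans (chainA f j y)

lemma chainB (f : B →ₗ[k] B) : ∀ (j : ℕ) (y : B),
    Submodule.Quotient.mk (p := oslashRel k B)
      (TensorProduct.map (conv f (convPow k B j)) (Rv k B (j + 1)) (Coalgebra.comul y))
    = Submodule.Quotient.mk (p := oslashRel k B)
      (TensorProduct.map f (Rv k B 1) (Coalgebra.comul y))
  | 0, y => by
    rw [show convPow k B 0 = convUnit k B B from rfl, conv_unit_right]
  | j + 1, y => by
    have h1 : conv f (convPow k B (j + 1)) = conv (conv f (convPow k B j)) LinearMap.id := by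
      rw [show convPow k B (j + 1) = conv (convPow k B j) LinearMap.id from rfl, conv_assoc]
    rw [h1, show Rv k B (j + 2) = rconv k B (Rv k B (j + 1)) from rfl]
    exact (step k B (conv f (convPow k B j)) (Rv k B (j + 1)) y).trans (chainB f j y)

lemma main_eq (n : ℕ) (S : B →ₗ[k] B)
    (hS : conv S (convPow k B (n + 1)) = convPow k B n) (y : B) :
    Submodule.Quotient.mk (p := oslashRel k B) (S y ⊗ₜ[k] (1 : B))
      = Submodule.Quotient.mk (p := oslashRel k B) ((1 : B) ⊗ₜ[k] y) := by
  have h1 := chainA k B S (n + 1) y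
  rw [hS] at h1
  have h2 := chainB k B (convUnit k B B) n y
  rw [conv_unit_left, Rv_one, map_convUnit_id_comul] at h2
  exact h1.symm.trans h2

lemma rel_mul_left (w : B ⊗[k] B) {a : B ⊗[k] B} (ha : a ∈ oslashRel k B) :
    w * a ∈ oslashRel k B := by
  induction ha using Submodule.span_induction with
  | mem z hz =>
    obtain ⟨m, b, hb, rfl⟩ := hz
    exact Submodule.subset_span ⟨w * m, b, hb, (mul_assoc w m _).symm⟩
  | zero => rw [mul_zero]; exact Submodule.zero_mem _
  | add x y hx hy hx' hy' => rw [mul_add]; exact Submodule.add_mem _ hx' hy'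
  | smul c x hx hx' => rw [mul_smul_comm]; exact Submodule.smul_mem _ c hx'

end Stmt7P
namespace Stmt7P
set_option synthInstance.maxHeartbeats 1000000
set_option maxHeartbeats 1000000
set_option linter.dupNamespace false

variable (k B : Type*) [CommRing k] [Ring B] [Bialgebra k B]

lemma iB_surj (n : ℕ) (S : B →ₗ[k] B)
    (hS : conv S (convPow k B (n + 1)) = convPow k B n) :
    Function.Surjective (iB k B) := by
  intro q
  obtain ⟨t, rfl⟩ := Submodule.Quotient.mk_surjective (oslashRel k B) q
  induction t using TensorProduct.induction_on with
  | zero =>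
    exact ⟨0, by simp [iB]⟩
  | tmul x y =>
    refine ⟨x * S y, ?_⟩
    have hmain : (S y ⊗ₜ[k] (1 : B)) - ((1 : B) ⊗ₜ[k] y) ∈ oslashRel k B :=
      Submodule.Quotient.eq _ |>.mp (main_eq k B n S hS y)
    have hfac : (x * S y) ⊗ₜ[k] (1 : B) - x ⊗ₜ[k] y
        = (x ⊗ₜ[k] (1 : B)) * ((S y ⊗ₜ[k] (1 : B)) - ((1 : B) ⊗ₜ[k] y)) := by
      rw [mul_sub, Algebra.TensorProduct.tmul_mul_tmul, Algebra.TensorProduct.tmul_mul_tmul,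
        mul_one, one_mul, mul_one]
    show Submodule.Quotient.mk ((TensorProduct.mk k B B).flip 1 (x * S y))
        = Submodule.Quotient.mk (x ⊗ₜ[k] y)
    rw [Submodule.Quotient.eq]
    show (x * S y) ⊗ₜ[k] (1 : B) - x ⊗ₜ[k] y ∈ oslashRel k B
    rw [hfac]
    exact rel_mul_left k B _ hmain
  | add a b ha hb =>
    obtain ⟨u, hu⟩ := ha
    obtain ⟨v, hv⟩ := hb
    refine ⟨u + v, ?_⟩
    rw [map_add, hu, hv, ← Submodule.Quotient.mk_add]

end Stmt7P

theorem stmt7 (k B : Type*) [Field k] [Ring B] [Bialgebra k B]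
    (n : ℕ) (S : B →ₗ[k] B)
    (hS : conv S (convPow k B (n + 1)) = convPow k B n) :
    (∀ y : B, omk k (S y ⊗ₜ[k] (1 : B)) = omk k ((1 : B) ⊗ₜ[k] y)) ∧
    Function.Surjective (iB k B) := by
  exact ⟨fun y => Stmt7P.main_eq k B n S hS y, Stmt7P.iB_surj k B n S hS⟩
end
end

section
/- Let B be a bialgebra with a left n-antipode S. Then for every coinvariant element Σ xᶦ ⊗ yᵢ ∈ B ⧄ B one has Σ S(xᶦ)ε(yᵢ) = Σ ε(xᶦ)yᵢ, and consequently the canonical map p_B : B ⧄ B → B, Σ xᶦ ⊗ yᵢ ↦ Σ xᶦ ε(yᵢ), is injective. -/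
set_option maxHeartbeats 1000000
set_option synthInstance.maxHeartbeats 200000

noncomputable section
open TensorProduct LinearMap

namespace Stmt8Aux

variable (k B : Type*) [CommRing k] [Ring B] [Bialgebra k B]

/-- shuffle used by `Em` : ((p⊗q)⊗b)⊗u ↦ (p⊗b)⊗(q*u) -/
def SH : (((B ⊗[k] B) ⊗[k] B) ⊗[k] B) →ₗ[k] ((B ⊗[k] B) ⊗[k] B) :=
  (TensorProduct.map LinearMap.id (LinearMap.mul' k B)) ∘ₗ
    (TensorProduct.tensorTensorTensorComm k B B B B).toLinearMap ∘ₗ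
    (TensorProduct.assoc k (B ⊗[k] B) B B).toLinearMap

@[simp] lemma SH_tmul (p q b u : B) :
    SH k B (((p ⊗ₜ q) ⊗ₜ b) ⊗ₜ u) = (p ⊗ₜ b) ⊗ₜ (q * u) := by
  simp [SH]

/-- shuffle used by `Dm` : (a⊗(p⊗q))⊗u ↦ (a⊗p)⊗(u*q) -/
def SH' : ((B ⊗[k] (B ⊗[k] B)) ⊗[k] B) →ₗ[k] ((B ⊗[k] B) ⊗[k] B) :=
  (LinearMap.lTensor (B ⊗[k] B)
      (LinearMap.mul' k B ∘ₗ (TensorProduct.comm k B B).toLinearMap)) ∘ₗ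
    (TensorProduct.assoc k (B ⊗[k] B) B B).toLinearMap ∘ₗ
    (LinearMap.rTensor B (TensorProduct.assoc k B B B).symm.toLinearMap)

@[simp] lemma SH'_tmul (a p q u : B) :
    SH' k B ((a ⊗ₜ (p ⊗ₜ q)) ⊗ₜ u) = (a ⊗ₜ p) ⊗ₜ (u * q) := by
  simp [SH']

/-- (a⊗b)⊗u ↦ Σ (a₁⊗b)⊗(a₂u) -/
def Em : ((B ⊗[k] B) ⊗[k] B) →ₗ[k] ((B ⊗[k] B) ⊗[k] B) :=
  SH k B ∘ₗ LinearMap.rTensor B (LinearMap.rTensor B (Coalgebra.comul (R := k)))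

@[simp] lemma Em_tmul (a b u : B) :
    Em k B ((a ⊗ₜ b) ⊗ₜ u) = SH k B ((Coalgebra.comul (R := k) a ⊗ₜ b) ⊗ₜ u) := by
  simp [Em]

/-- (a⊗b)⊗u ↦ Σ (a⊗b₁)⊗(u*b₂) -/
def Dm : ((B ⊗[k] B) ⊗[k] B) →ₗ[k] ((B ⊗[k] B) ⊗[k] B) :=
  SH' k B ∘ₗ LinearMap.rTensor B (LinearMap.lTensor B (Coalgebra.comul (R := k)))

@[simp] lemma Dm_tmul (a b u : B) :
    Dm k B ((a ⊗ₜ b) ⊗ₜ u) = SH' k B ((a ⊗ₜ Coalgebra.comul (R := k) b) ⊗ₜ u) := by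
  simp [Dm]

/-- (a⊗b)⊗u ↦ (g a * u)⊗b -/
def Psi (g : B →ₗ[k] B) : ((B ⊗[k] B) ⊗[k] B) →ₗ[k] (B ⊗[k] B) :=
  (TensorProduct.comm k B B).toLinearMap ∘ₗ
    (LinearMap.lTensor B (LinearMap.mul' k B)) ∘ₗ
    (TensorProduct.assoc k B B B).toLinearMap ∘ₗ
    (LinearMap.rTensor B (TensorProduct.comm k B B).toLinearMap) ∘ₗ
    (LinearMap.rTensor B (LinearMap.rTensor B g))

@[simp] lemma Psi_tmul (g : B →ₗ[k] B) (a b u : B) :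
    Psi k B g ((a ⊗ₜ b) ⊗ₜ u) = (g a * u) ⊗ₜ b := by
  simp [Psi]

/-- (s⊗q)⊗u ↦ s*(u*q) -/
def W3 : ((B ⊗[k] B) ⊗[k] B) →ₗ[k] B :=
  LinearMap.mul' k B ∘ₗ
    (LinearMap.lTensor B (LinearMap.mul' k B ∘ₗ (TensorProduct.comm k B B).toLinearMap)) ∘ₗ
    (TensorProduct.assoc k B B B).toLinearMap

@[simp] lemma W3_tmul (s q u : B) :
    W3 k B ((s ⊗ₜ q) ⊗ₜ u) = s * (u * q) := by
  simp [W3]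

/-- (a⊗b)⊗u ↦ Σ (a₁⊗b₁)⊗(a₂*(u*b₂)) -/
def BigG : ((B ⊗[k] B) ⊗[k] B) →ₗ[k] ((B ⊗[k] B) ⊗[k] B) :=
  (LinearMap.lTensor (B ⊗[k] B) (W3 k B)) ∘ₗ
    (TensorProduct.assoc k (B ⊗[k] B) (B ⊗[k] B) B).toLinearMap ∘ₗ
    (LinearMap.rTensor B (TensorProduct.tensorTensorTensorComm k B B B B).toLinearMap) ∘ₗ
    (LinearMap.rTensor B
      (TensorProduct.map (Coalgebra.comul (R := k)) (Coalgebra.comul (R := k))))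

@[simp] lemma BigG_tmul (a b u : B) :
    BigG k B ((a ⊗ₜ b) ⊗ₜ u) =
      (LinearMap.lTensor (B ⊗[k] B) (W3 k B))
        ((TensorProduct.assoc k (B ⊗[k] B) (B ⊗[k] B) B)
          (((TensorProduct.tensorTensorTensorComm k B B B B)
            (Coalgebra.comul (R := k) a ⊗ₜ Coalgebra.comul (R := k) b)) ⊗ₜ u)) := by
  simp [BigG]

lemma em_dm : Em k B ∘ₗ Dm k B = BigG k B := by
  apply TensorProduct.ext_threefold
  intro a b u
  simp only [LinearMap.comp_apply, Dm_tmul, BigG_tmul]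
  have key : ∀ w : B ⊗[k] B,
      Em k B (SH' k B ((a ⊗ₜ w) ⊗ₜ u)) =
      (LinearMap.lTensor (B ⊗[k] B) (W3 k B))
        ((TensorProduct.assoc k (B ⊗[k] B) (B ⊗[k] B) B)
          (((TensorProduct.tensorTensorTensorComm k B B B B)
            (Coalgebra.comul (R := k) a ⊗ₜ w)) ⊗ₜ u)) := by
    intro w
    induction w using TensorProduct.induction_on with
    | zero => simp [tmul_zero, zero_tmul]
    | tmul p q =>
        simp only [SH'_tmul, Em_tmul]
        have key2 : ∀ v : B ⊗[k] B,
            SH k B ((v ⊗ₜ p) ⊗ₜ (u * q)) =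
            (LinearMap.lTensor (B ⊗[k] B) (W3 k B))
              ((TensorProduct.assoc k (B ⊗[k] B) (B ⊗[k] B) B)
                (((TensorProduct.tensorTensorTensorComm k B B B B)
                  (v ⊗ₜ (p ⊗ₜ q))) ⊗ₜ u)) := by
          intro v
          induction v using TensorProduct.induction_on with
          | zero => simp [tmul_zero, zero_tmul]
          | tmul r s => simp [mul_assoc]
          | add v₁ v₂ h₁ h₂ => simp [tmul_add, add_tmul, map_add, h₁, h₂]
        exact key2 _
    | add w₁ w₂ h₁ h₂ => simp [tmul_add, add_tmul, map_add, h₁, h₂]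
  exact key _

lemma dm_em : Dm k B ∘ₗ Em k B = BigG k B := by
  apply TensorProduct.ext_threefold
  intro a b u
  simp only [LinearMap.comp_apply, Em_tmul, BigG_tmul]
  have key : ∀ v : B ⊗[k] B,
      Dm k B (SH k B ((v ⊗ₜ b) ⊗ₜ u)) =
      (LinearMap.lTensor (B ⊗[k] B) (W3 k B))
        ((TensorProduct.assoc k (B ⊗[k] B) (B ⊗[k] B) B)
          (((TensorProduct.tensorTensorTensorComm k B B B B)
            (v ⊗ₜ Coalgebra.comul (R := k) b)) ⊗ₜ u)) := by
    intro v
    induction v using TensorProduct.induction_on with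
    | zero => simp [tmul_zero, zero_tmul]
    | tmul r s =>
        simp only [SH_tmul, Dm_tmul]
        have key2 : ∀ w : B ⊗[k] B,
            SH' k B ((r ⊗ₜ w) ⊗ₜ (s * u)) =
            (LinearMap.lTensor (B ⊗[k] B) (W3 k B))
              ((TensorProduct.assoc k (B ⊗[k] B) (B ⊗[k] B) B)
                (((TensorProduct.tensorTensorTensorComm k B B B B)
                  ((r ⊗ₜ s) ⊗ₜ w)) ⊗ₜ u)) := by
          intro w
          induction w using TensorProduct.induction_on with
          | zero => simp [tmul_zero, zero_tmul]
          | tmul p q => simp [mul_assoc]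
          | add w₁ w₂ h₁ h₂ => simp [tmul_add, add_tmul, map_add, h₁, h₂]
        exact key2 _
    | add v₁ v₂ h₁ h₂ => simp [tmul_add, add_tmul, map_add, h₁, h₂]
  exact key _

lemma em_dm_comm : Em k B ∘ₗ Dm k B = Dm k B ∘ₗ Em k B := by
  rw [em_dm, dm_em]

lemma bigG_unitR : BigG k B ∘ₗ unitR k B = coact k B := by
  apply TensorProduct.ext'
  intro a b
  have hu : unitR k B (a ⊗ₜ b) = (a ⊗ₜ b) ⊗ₜ (1 : B) := by
    simp [unitR, TensorProduct.rid_symm_apply]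
  simp only [LinearMap.comp_apply, hu, BigG_tmul, coact, TensorProduct.map_tmul,
    LinearMap.id_coe, id_eq, LinearEquiv.coe_coe]
  have key : ∀ t : (B ⊗[k] B) ⊗[k] (B ⊗[k] B),
      (LinearMap.lTensor (B ⊗[k] B) (W3 k B))
        ((TensorProduct.assoc k (B ⊗[k] B) (B ⊗[k] B) B) (t ⊗ₜ (1 : B))) =
      TensorProduct.map LinearMap.id (LinearMap.mul' k B) t := by
    intro t
    induction t using TensorProduct.induction_on with
    | zero => simp [tmul_zero, zero_tmul]
    | tmul P Q =>
        simp only [TensorProduct.assoc_tmul, LinearMap.lTensor_tmul,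
          TensorProduct.map_tmul, LinearMap.id_coe, id_eq]
        congr 1
        induction Q using TensorProduct.induction_on with
        | zero => simp [tmul_zero, zero_tmul]
        | tmul s q => simp
        | add Q₁ Q₂ h₁ h₂ => simp [tmul_add, add_tmul, map_add, h₁, h₂]
    | add t₁ t₂ h₁ h₂ => simp [tmul_add, add_tmul, map_add, h₁, h₂]
  rw [key]

lemma gm_unitR : Em k B ∘ₗ Dm k B ∘ₗ unitR k B = coact k B := by
  rw [← LinearMap.comp_assoc, em_dm, bigG_unitR]

lemma psi_em (g : B →ₗ[k] B) :
    Psi k B g ∘ₗ Em k B = Psi k B (conv g LinearMap.id) := by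
  apply TensorProduct.ext_threefold
  intro a b u
  simp only [LinearMap.comp_apply, Em_tmul, Psi_tmul, conv]
  have key : ∀ v : B ⊗[k] B,
      Psi k B g (SH k B ((v ⊗ₜ b) ⊗ₜ u)) =
      (LinearMap.mul' k B (TensorProduct.map g LinearMap.id v) * u) ⊗ₜ b := by
    intro v
    induction v using TensorProduct.induction_on with
    | zero => simp [tmul_zero, zero_tmul]
    | tmul r s => simp [mul_assoc]
    | add v₁ v₂ h₁ h₂ => simp [add_tmul, add_mul, h₁, h₂]
  exact key _

lemma psi_unitR (g : B →ₗ[k] B) :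
    Psi k B g ∘ₗ unitR k B = TensorProduct.map g LinearMap.id := by
  apply TensorProduct.ext'
  intro a b
  have hu : unitR k B (a ⊗ₜ b) = (a ⊗ₜ b) ⊗ₜ (1 : B) := by
    simp [unitR, TensorProduct.rid_symm_apply]
  simp [hu]

lemma conv_unit_right (g : B →ₗ[k] B) : conv g (convUnit k B B) = g := by
  ext a
  have key : ∀ w : B ⊗[k] B,
      LinearMap.mul' k B (TensorProduct.map g (convUnit k B B) w) =
      (LinearMap.mul' k B ∘ₗ TensorProduct.map g (Algebra.linearMap k B))
        ((Coalgebra.counit (R := k)).lTensor B w) := by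
    intro w
    induction w using TensorProduct.induction_on with
    | zero => simp
    | tmul p q => simp [convUnit]
    | add w₁ w₂ h₁ h₂ => simp [map_add, h₁, h₂]
  simp only [conv, LinearMap.comp_apply, key, Coalgebra.lTensor_counit_comul]
  simp

lemma conv_unit_left (g : B →ₗ[k] B) : conv (convUnit k B B) g = g := by
  ext a
  have key : ∀ w : B ⊗[k] B,
      LinearMap.mul' k B (TensorProduct.map (convUnit k B B) g w) =
      (LinearMap.mul' k B ∘ₗ TensorProduct.map (Algebra.linearMap k B) g)
        ((Coalgebra.counit (R := k)).rTensor B w) := by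
    intro w
    induction w using TensorProduct.induction_on with
    | zero => simp
    | tmul p q => simp [convUnit]
    | add w₁ w₂ h₁ h₂ => simp [map_add, h₁, h₂]
  simp only [conv, LinearMap.comp_apply, key, Coalgebra.rTensor_counit_comul]
  simp

lemma conv_assoc (g h f : B →ₗ[k] B) :
    conv (conv g h) f = conv g (conv h f) := by
  ext a
  -- L1 : ((B⊗B)⊗B) → B , L2 : B⊗(B⊗B) → B
  set L1 : ((B ⊗[k] B) ⊗[k] B) →ₗ[k] B :=
    LinearMap.mul' k B ∘ₗ
      (TensorProduct.map (LinearMap.mul' k B) LinearMap.id) ∘ₗ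
      (TensorProduct.map (TensorProduct.map g h) f) with hL1
  set L2 : (B ⊗[k] (B ⊗[k] B)) →ₗ[k] B :=
    LinearMap.mul' k B ∘ₗ
      (TensorProduct.map g (LinearMap.mul' k B ∘ₗ TensorProduct.map h f)) with hL2
  have claim1 : ∀ w : B ⊗[k] B,
      LinearMap.mul' k B (TensorProduct.map (conv g h) f w) =
      L1 ((Coalgebra.comul (R := k)).rTensor B w) := by
    intro w
    induction w using TensorProduct.induction_on with
    | zero => simp
    | tmul p q => simp [conv, hL1]
    | add w₁ w₂ h₁ h₂ => simp [map_add, h₁, h₂]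
  have claim2 : ∀ w : B ⊗[k] B,
      LinearMap.mul' k B (TensorProduct.map g (conv h f) w) =
      L2 ((Coalgebra.comul (R := k)).lTensor B w) := by
    intro w
    induction w using TensorProduct.induction_on with
    | zero => simp
    | tmul p q => simp [conv, hL2]
    | add w₁ w₂ h₁ h₂ => simp [map_add, h₁, h₂]
  have bridge : L1 = L2 ∘ₗ (TensorProduct.assoc k B B B).toLinearMap := by
    apply TensorProduct.ext_threefold
    intro x y w
    simp [hL1, hL2, mul_assoc]
  calc (conv (conv g h) f) a
      = L1 ((Coalgebra.comul (R := k)).rTensor B (Coalgebra.comul a)) := by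
        rw [show (conv (conv g h) f) a
            = LinearMap.mul' k B (TensorProduct.map (conv g h) f (Coalgebra.comul a)) from rfl,
          claim1]
    _ = L2 ((TensorProduct.assoc k B B B)
          ((Coalgebra.comul (R := k)).rTensor B (Coalgebra.comul a))) := by
        rw [bridge]; rfl
    _ = L2 ((Coalgebra.comul (R := k)).lTensor B (Coalgebra.comul a)) := by
        rw [Coalgebra.coassoc_apply]
    _ = (conv g (conv h f)) a := by
        rw [show (conv g (conv h f)) a
            = LinearMap.mul' k B (TensorProduct.map g (conv h f) (Coalgebra.comul a)) from rfl,
          claim2]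

lemma em_dm_pow_comm (m : ℕ) :
    Em k B ∘ₗ (Dm k B ^ m : _ →ₗ[k] _) = (Dm k B ^ m : _ →ₗ[k] _) ∘ₗ Em k B := by
  induction m with
  | zero => simp [Module.End.one_eq_id]
  | succ m ih =>
      rw [pow_succ, Module.End.mul_eq_comp, ← LinearMap.comp_assoc, ih,
        LinearMap.comp_assoc, em_dm_comm, ← LinearMap.comp_assoc]

lemma key_lemma (W : (B ⊗[k] B) ⊗[k] B) (hW : Em k B (Dm k B W) = W) :
    ∀ (m : ℕ) (g : B →ₗ[k] B),
      Psi k B (conv g (convPow k B m)) ((Dm k B ^ m : _ →ₗ[k] _) W) = Psi k B g W := by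
  intro m
  induction m with
  | zero =>
      intro g
      rw [show convPow k B 0 = convUnit k B B from rfl, conv_unit_right]
      simp [Module.End.one_eq_id]
  | succ m ih =>
      intro g
      have h1 : conv g (convPow k B (m + 1)) = conv (conv g (convPow k B m)) LinearMap.id := by
        rw [show convPow k B (m+1) = conv (convPow k B m) LinearMap.id from rfl, conv_assoc]
      rw [h1, ← psi_em, LinearMap.comp_apply]
      have h2 : Em k B ((Dm k B ^ (m+1) : _ →ₗ[k] _) W) = (Dm k B ^ m : _ →ₗ[k] _) W := by
        have e1 : (Dm k B ^ (m+1) : _ →ₗ[k] _) W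
            = (Dm k B ^ m : _ →ₗ[k] _) (Dm k B W) := by
          rw [pow_succ, Module.End.mul_apply]
        rw [e1, ← LinearMap.comp_apply, em_dm_pow_comm, LinearMap.comp_apply, hW]
      rw [h2]
      exact ih g

lemma final_contraction :
    (TensorProduct.rid k B).toLinearMap ∘ₗ
      (TensorProduct.map LinearMap.id (Coalgebra.counit (R := k))) ∘ₗ
      Psi k B (convUnit k B B) ∘ₗ Dm k B ∘ₗ unitR k B = qB0 k B := by
  apply TensorProduct.ext'
  intro a b
  have hu : unitR k B (a ⊗ₜ b) = (a ⊗ₜ b) ⊗ₜ (1 : B) := by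
    simp [unitR, TensorProduct.rid_symm_apply]
  simp only [LinearMap.comp_apply, hu, Dm_tmul]
  have key : ∀ w : B ⊗[k] B,
      (TensorProduct.rid k B)
        ((TensorProduct.map LinearMap.id (Coalgebra.counit (R := k)))
          (Psi k B (convUnit k B B) (SH' k B ((a ⊗ₜ w) ⊗ₜ (1 : B))))) =
      Coalgebra.counit (R := k) a •
        (TensorProduct.lid k B) ((Coalgebra.counit (R := k)).rTensor B w) := by
    intro w
    induction w using TensorProduct.induction_on with
    | zero => simp [tmul_zero, zero_tmul]
    | tmul p q =>
        simp only [SH'_tmul, Psi_tmul, TensorProduct.map_tmul, LinearMap.id_coe, id_eq,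
          TensorProduct.rid_tmul, LinearMap.rTensor_tmul, TensorProduct.lid_tmul,
          convUnit, LinearMap.comp_apply, Algebra.linearMap_apply, one_mul]
        rw [← Algebra.smul_def]
        exact smul_comm _ _ _
    | add w₁ w₂ h₁ h₂ => simp [tmul_add, add_tmul, map_add, h₁, h₂]
  refine (key (Coalgebra.comul (R := k) b)).trans ?_
  rw [Coalgebra.rTensor_counit_comul]
  simp [qB0]

lemma part1 (n : ℕ) (S : B →ₗ[k] B)
    (hS : conv S (convPow k B (n + 1)) = convPow k B n)
    (z : B ⊗[k] B) (hz : coact k B z = unitR k B z) :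
    ((TensorProduct.rid k B).toLinearMap ∘ₗ TensorProduct.map S Coalgebra.counit) z
      = qB0 k B z := by
  have hW : Em k B (Dm k B (unitR k B z)) = unitR k B z := by
    have h := LinearMap.congr_fun (gm_unitR k B) z
    simp only [LinearMap.comp_apply] at h
    rw [h, hz]
  have hW2 : Em k B (Dm k B (Dm k B (unitR k B z))) = Dm k B (unitR k B z) := by
    have h := LinearMap.congr_fun (em_dm_comm k B) (Dm k B (unitR k B z))
    simp only [LinearMap.comp_apply] at h
    rw [h, hW]
  have a1 := key_lemma k B (unitR k B z) hW (n + 1) S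
  rw [hS] at a1
  have a2 := key_lemma k B (Dm k B (unitR k B z)) hW2 n (convUnit k B B)
  rw [conv_unit_left] at a2
  rw [show ((Dm k B ^ (n+1) : _ →ₗ[k] _)) (unitR k B z)
      = (Dm k B ^ n : _ →ₗ[k] _) (Dm k B (unitR k B z)) by
    rw [pow_succ, Module.End.mul_apply]] at a1
  have step : Psi k B S (unitR k B z) = Psi k B (convUnit k B B) (Dm k B (unitR k B z)) :=
    a1.symm.trans a2
  have hsplit : (TensorProduct.map S (Coalgebra.counit (R := k)) : B ⊗[k] B →ₗ[k] B ⊗[k] k)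
      = (TensorProduct.map LinearMap.id Coalgebra.counit) ∘ₗ
        (TensorProduct.map S LinearMap.id) := by
    rw [← TensorProduct.map_comp, LinearMap.id_comp, LinearMap.comp_id]
  have h3 : (TensorProduct.map S LinearMap.id) z = Psi k B S (unitR k B z) :=
    (LinearMap.congr_fun (psi_unitR k B S) z).symm
  have h4 := LinearMap.congr_fun (final_contraction k B) z
  simp only [LinearMap.comp_apply] at h4 ⊢
  rw [hsplit]
  simp only [LinearMap.comp_apply]
  rw [h3, step]
  exact h4

/-- x ↦ Σ f(x₁) x₂ -/
def lf (f : B →ₗ[k] k) : B →ₗ[k] B :=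
  (TensorProduct.lid k B).toLinearMap ∘ₗ TensorProduct.map f LinearMap.id ∘ₗ
    Coalgebra.comul

lemma comul_lf (f : B →ₗ[k] k) (a : B) :
    Coalgebra.comul (R := k) (lf k B f a) = (lf k B f).rTensor B (Coalgebra.comul a) := by
  have e1 : ∀ w : B ⊗[k] B,
      Coalgebra.comul (R := k)
        ((TensorProduct.lid k B) ((TensorProduct.map f LinearMap.id) w)) =
      (TensorProduct.lid k (B ⊗[k] B))
        ((TensorProduct.map f LinearMap.id)
          ((Coalgebra.comul (R := k) (A := B)).lTensor B w)) := by
    intro w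
    induction w using TensorProduct.induction_on with
    | zero => simp
    | tmul p q => simp
    | add w₁ w₂ h₁ h₂ => simp [map_add, h₁, h₂]
  have e2 : ∀ t : (B ⊗[k] B) ⊗[k] B,
      (TensorProduct.lid k (B ⊗[k] B))
        ((TensorProduct.map f LinearMap.id) ((TensorProduct.assoc k B B B) t)) =
      LinearMap.rTensor B
        ((TensorProduct.lid k B).toLinearMap ∘ₗ TensorProduct.map f LinearMap.id) t := by
    intro t
    induction t using TensorProduct.induction_on with
    | zero => simp
    | tmul P c =>
        induction P using TensorProduct.induction_on with
        | zero => simp [zero_tmul]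
        | tmul x y => simp [smul_tmul]
        | add P₁ P₂ h₁ h₂ => simp [add_tmul, map_add, h₁, h₂]
    | add t₁ t₂ h₁ h₂ => simp [map_add, h₁, h₂]
  calc Coalgebra.comul (R := k) (lf k B f a)
      = (TensorProduct.lid k (B ⊗[k] B))
          ((TensorProduct.map f LinearMap.id)
            ((Coalgebra.comul (R := k) (A := B)).lTensor B (Coalgebra.comul a))) := e1 _
    _ = (TensorProduct.lid k (B ⊗[k] B))
          ((TensorProduct.map f LinearMap.id)
            ((TensorProduct.assoc k B B B)
              ((Coalgebra.comul (R := k) (A := B)).rTensor B (Coalgebra.comul a)))) := by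
        rw [Coalgebra.coassoc_apply]
    _ = LinearMap.rTensor B
          ((TensorProduct.lid k B).toLinearMap ∘ₗ TensorProduct.map f LinearMap.id)
          ((Coalgebra.comul (R := k) (A := B)).rTensor B (Coalgebra.comul a)) := e2 _
    _ = (lf k B f).rTensor B (Coalgebra.comul a) := by
        rw [← LinearMap.rTensor_comp_apply]; rfl

lemma coact_Wf (f : B →ₗ[k] k) :
    coact k B ∘ₗ (TensorProduct.map (lf k B f) LinearMap.id) =
      (TensorProduct.map (lf k B f) LinearMap.id).rTensor B ∘ₗ coact k B := by
  apply TensorProduct.ext'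
  intro a b
  simp only [LinearMap.comp_apply, TensorProduct.map_tmul, LinearMap.id_coe, id_eq,
    coact, LinearEquiv.coe_coe]
  rw [comul_lf]
  have claim : ∀ v w : B ⊗[k] B,
      (TensorProduct.map LinearMap.id (LinearMap.mul' k B))
        ((TensorProduct.tensorTensorTensorComm k B B B B)
          (((lf k B f).rTensor B v) ⊗ₜ w)) =
      (TensorProduct.map (lf k B f) LinearMap.id).rTensor B
        ((TensorProduct.map LinearMap.id (LinearMap.mul' k B))
          ((TensorProduct.tensorTensorTensorComm k B B B B) (v ⊗ₜ w))) := by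
    intro v w
    induction v using TensorProduct.induction_on with
    | zero => simp [zero_tmul]
    | tmul p q =>
        induction w using TensorProduct.induction_on with
        | zero => simp [tmul_zero]
        | tmul r s => simp
        | add w₁ w₂ h₁ h₂ =>
            simp only [LinearMap.rTensor_tmul] at h₁ h₂
            simp [tmul_add, map_add, h₁, h₂]
    | add v₁ v₂ h₁ h₂ =>
        simp [add_tmul, map_add, h₁, h₂]
  exact claim _ _

lemma unitR_apply (m : B ⊗[k] B) : unitR k B m = m ⊗ₜ (1 : B) := by
  simp [unitR, TensorProduct.rid_symm_apply]

lemma unitR_natural (A : B ⊗[k] B →ₗ[k] B ⊗[k] B) :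
    unitR k B ∘ₗ A = A.rTensor B ∘ₗ unitR k B := by
  ext x
  simp [unitR_apply]

lemma M1 (g : B →ₗ[k] B) (f : B →ₗ[k] k) :
    ((TensorProduct.rid k B).toLinearMap ∘ₗ TensorProduct.map g Coalgebra.counit) ∘ₗ
      (TensorProduct.map (lf k B f) LinearMap.id) =
    g ∘ₗ lf k B f ∘ₗ pB0 k B := by
  apply TensorProduct.ext'
  intro a b
  simp [pB0]

lemma S2 (f : B →ₗ[k] k) (a : B) :
    Coalgebra.counit (R := k) (lf k B f a) = f a := by
  have claim : ∀ w : B ⊗[k] B,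
      Coalgebra.counit (R := k)
        ((TensorProduct.lid k B) ((TensorProduct.map f LinearMap.id) w)) =
      f ((TensorProduct.rid k B) ((Coalgebra.counit (R := k)).lTensor B w)) := by
    intro w
    induction w using TensorProduct.induction_on with
    | zero => simp
    | tmul p q => simp [mul_comm]
    | add w₁ w₂ h₁ h₂ => simp [map_add, h₁, h₂]
  have h := claim (Coalgebra.comul a)
  rw [Coalgebra.lTensor_counit_comul] at h
  simpa [lf] using h

lemma M2 (f : B →ₗ[k] k) :
    qB0 k B ∘ₗ (TensorProduct.map (lf k B f) LinearMap.id) =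
      (TensorProduct.lid k B).toLinearMap ∘ₗ TensorProduct.map f LinearMap.id := by
  apply TensorProduct.ext'
  intro a b
  simp [qB0, S2]

end Stmt8Aux

namespace Stmt8Inj

open Stmt8Aux

variable (k B : Type*) [Field k] [Ring B] [Bialgebra k B]

lemma inj_core (n : ℕ) (S : B →ₗ[k] B)
    (hS : conv S (convPow k B (n + 1)) = convPow k B n)
    (z : B ⊗[k] B) (hz : coact k B z = unitR k B z) (hp : pB0 k B z = 0) :
    z = 0 := by
  have hf : ∀ f : B →ₗ[k] k,
      TensorProduct.map f (LinearMap.id : B →ₗ[k] B) z = 0 := by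
    intro f
    set w := TensorProduct.map (lf k B f) LinearMap.id z with hwdef
    have hw : coact k B w = unitR k B w := by
      have h1 := LinearMap.congr_fun (coact_Wf k B f) z
      have h2 := LinearMap.congr_fun
        (unitR_natural k B (TensorProduct.map (lf k B f) LinearMap.id)) z
      simp only [LinearMap.comp_apply] at h1 h2
      rw [hwdef, h1, hz, h2]
    have hp1 := part1 k B n S hS w hw
    have hL : ((TensorProduct.rid k B).toLinearMap ∘ₗ
        TensorProduct.map S Coalgebra.counit) w = 0 := by
      have h3 := LinearMap.congr_fun (M1 k B S f) z
      simp only [LinearMap.comp_apply] at h3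
      simp only [LinearMap.comp_apply]
      rw [hwdef, h3, hp]
      simp
    have hq : qB0 k B w = 0 := by rw [← hp1, hL]
    have h4 := LinearMap.congr_fun (M2 k B f) z
    simp only [LinearMap.comp_apply] at h4
    rw [hwdef, h4] at hq
    exact ((TensorProduct.lid k B).map_eq_zero_iff).mp hq
  let bB := Module.Basis.ofVectorSpace k B
  have haux : ∀ (v : B ⊗[k] B) (i j), (bB.tensorProduct bB).repr v (i, j)
      = bB.coord j ((TensorProduct.lid k B)
          ((TensorProduct.map (bB.coord i) LinearMap.id) v)) := by
    intro v
    induction v using TensorProduct.induction_on with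
    | zero => simp
    | tmul x y =>
        intro i j
        simp [Module.Basis.tensorProduct_repr_tmul_apply, Module.Basis.coord_apply, mul_comm]
    | add v₁ v₂ h₁ h₂ =>
        intro i j
        simp [map_add, Finsupp.add_apply, h₁ i j, h₂ i j]
  have hrepr : (bB.tensorProduct bB).repr z = 0 := by
    ext ij
    obtain ⟨i, j⟩ := ij
    rw [haux z i j, hf (bB.coord i)]
    simp
  exact ((bB.tensorProduct bB).repr.map_eq_zero_iff).mp hrepr

end Stmt8Inj

theorem stmt8 (k B : Type*) [Field k] [Ring B] [Bialgebra k B]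
    (n : ℕ) (S : B →ₗ[k] B)
    (hS : conv S (convPow k B (n + 1)) = convPow k B n) :
    (∀ z ∈ coinv k B,
      ((TensorProduct.rid k B).toLinearMap ∘ₗ TensorProduct.map S Coalgebra.counit) z
        = qB0 k B z) ∧
    Function.Injective (pB k B) := by
  constructor
  · intro z hz
    exact Stmt8Aux.part1 k B n S hS z (LinearMap.mem_eqLocus.mp hz)
  · rw [injective_iff_map_eq_zero]
    intro w hw
    have hz : coact k B (w : B ⊗[k] B) = unitR k B (w : B ⊗[k] B) :=
      LinearMap.mem_eqLocus.mp w.2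
    have hp : pB0 k B (w : B ⊗[k] B) = 0 := hw
    exact Subtype.ext (Stmt8Inj.inj_core k B n S hS (w : B ⊗[k] B) hz hp)
end
end

section
/- Let B be a bialgebra. The map p_B : B ⧄ B → B, Σ xᶦ ⊗ yᵢ ↦ Σ xᶦ ε(yᵢ), is injective if and only if there exists a linear endomorphism T of B such that T(Σ xᶦ ε(yᵢ)) = Σ ε(xᶦ) yᵢ for every Σ xᶦ ⊗ yᵢ ∈ B ⧄ B, if and only if Σ xᶦ₁ ⊗ T(xᶦ₂)ε(yᵢ) = Σ xᶦ ⊗ yᵢ for every such element. -/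
noncomputable section
open TensorProduct LinearMap

/- ### Auxiliary lemmas for `stmt9` -/

section Stmt9Aux

open Coalgebra

set_option synthInstance.maxHeartbeats 1000000
set_option maxHeartbeats 1000000

variable (k B : Type*) [CommRing k] [Ring B] [Bialgebra k B]

/-- The map `x ⊗ y ↦ Σ x₁ ⊗ (x₂ ⊗ y)`. -/
def st9fmap : (B ⊗[k] B) →ₗ[k] B ⊗[k] (B ⊗[k] B) :=
  (TensorProduct.assoc k B B B).toLinearMap ∘ₗ rTensor B (Coalgebra.comul (R := k))

/-- The map `(a ⊗ b) ⊗ (u ⊗ v) ↦ (a ⊗ u) ⊗ bv`. -/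
def st9gmap : ((B ⊗[k] B) ⊗[k] (B ⊗[k] B)) →ₗ[k] (B ⊗[k] B) ⊗[k] B :=
  (TensorProduct.map LinearMap.id (LinearMap.mul' k B)) ∘ₗ
    (TensorProduct.tensorTensorTensorComm k B B B B).toLinearMap

def st9A4 : (B ⊗[k] (B ⊗[k] B)) ⊗[k] B →ₗ[k] B ⊗[k] ((B ⊗[k] B) ⊗[k] B) :=
  (TensorProduct.assoc k B (B ⊗[k] B) B).toLinearMap

def st9A4' : (B ⊗[k] (B ⊗[k] B)) ⊗[k] (B ⊗[k] B) →ₗ[k]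
    B ⊗[k] ((B ⊗[k] B) ⊗[k] (B ⊗[k] B)) :=
  (TensorProduct.assoc k B (B ⊗[k] B) (B ⊗[k] B)).toLinearMap

lemma st9_pB0_tmul (x y : B) : pB0 k B (x ⊗ₜ y) = counit (R := k) y • x := by
  simp [pB0]

lemma st9_qB0_tmul (x y : B) : qB0 k B (x ⊗ₜ y) = counit (R := k) x • y := by
  simp [qB0]

lemma st9_coact_eq : coact k B = st9gmap k B ∘ₗ TensorProduct.map comul comul := rfl

lemma st9_coact_tmul (x y : B) :
    coact k B (x ⊗ₜ y) = st9gmap k B ((comul (R := k) x) ⊗ₜ (comul (R := k) y)) := by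
  rw [st9_coact_eq]; simp

lemma st9gmap_tmul (p q u v : B) :
    st9gmap k B ((p ⊗ₜ[k] q) ⊗ₜ (u ⊗ₜ[k] v)) = (p ⊗ₜ[k] u) ⊗ₜ[k] (q * v) := by
  simp [st9gmap]

lemma st9fmap_tmul (x y : B) :
    st9fmap k B (x ⊗ₜ y) = (TensorProduct.assoc k B B B) ((comul (R := k) x) ⊗ₜ y) := by
  simp [st9fmap]

lemma st9_unitR_apply (m : B ⊗[k] B) : unitR k B m = m ⊗ₜ (1 : B) := by
  simp [unitR]

lemma st9_pB0_comul (x : B) : pB0 k B (comul (R := k) x) = x := by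
  have := Coalgebra.lTensor_counit_comul (R := k) x
  rw [pB0]
  simp only [LinearMap.coe_comp, Function.comp_apply]
  rw [show (TensorProduct.map LinearMap.id (counit (R := k)) : B ⊗[k] B →ₗ[k] B ⊗[k] k) =
    LinearMap.lTensor B counit from rfl]
  rw [this]
  simp

lemma st9I1 : (Coalgebra.comul (R := k)) ∘ₗ pB0 k B = lTensor B (pB0 k B) ∘ₗ st9fmap k B := by
  apply TensorProduct.ext'
  intro x y
  simp only [LinearMap.coe_comp, Function.comp_apply, st9_pB0_tmul, st9fmap_tmul, map_smul]
  generalize comul (R := k) x = c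
  induction c using TensorProduct.induction_on with
  | zero => rw [zero_tmul, map_zero, map_zero, smul_zero]
  | tmul a b =>
      rw [TensorProduct.assoc_tmul, lTensor_tmul, st9_pB0_tmul, TensorProduct.smul_tmul',
        TensorProduct.smul_tmul]
  | add u v hu hv => rw [add_tmul, map_add, map_add, smul_add, hu, hv]

lemma st9I2aux (c : B ⊗[k] B) (y : B) :
    lTensor B (qB0 k B) ((TensorProduct.assoc k B B B) (c ⊗ₜ y)) = (pB0 k B c) ⊗ₜ y := by
  induction c using TensorProduct.induction_on with
  | zero => rw [zero_tmul, map_zero, map_zero, map_zero, zero_tmul]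
  | tmul a b =>
      rw [TensorProduct.assoc_tmul, lTensor_tmul, st9_qB0_tmul, st9_pB0_tmul,
        TensorProduct.smul_tmul]
  | add u v hu hv => rw [add_tmul, map_add, map_add, hu, hv, map_add, add_tmul]

lemma st9I2 : lTensor B (qB0 k B) ∘ₗ st9fmap k B = LinearMap.id := by
  apply TensorProduct.ext'
  intro x y
  simp only [LinearMap.coe_comp, Function.comp_apply, st9fmap_tmul, LinearMap.id_coe, id_eq]
  rw [st9I2aux, st9_pB0_comul]

lemma st9M1 (c : B ⊗[k] B) (y : B) :
    lTensor B (coact k B) ((TensorProduct.assoc k B B B) (c ⊗ₜ y)) =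
      lTensor B (st9gmap k B)
        (st9A4' k B ((lTensor B (comul (R := k)) c) ⊗ₜ (comul (R := k) y))) := by
  induction c using TensorProduct.induction_on with
  | zero => rw [zero_tmul, map_zero, map_zero, map_zero, zero_tmul, map_zero, map_zero]
  | tmul a b =>
      rw [TensorProduct.assoc_tmul, lTensor_tmul, st9_coact_tmul, lTensor_tmul]
      rw [show st9A4' k B ((a ⊗ₜ[k] comul (R := k) b) ⊗ₜ (comul (R := k) y)) =
        a ⊗ₜ ((comul (R := k) b) ⊗ₜ (comul (R := k) y)) from TensorProduct.assoc_tmul a _ _,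
        lTensor_tmul]
  | add u v hu hv =>
      rw [add_tmul, map_add, map_add, map_add, add_tmul, map_add, map_add, hu, hv]

lemma st9M2aux (t : B ⊗[k] B) (q u v : B) :
    st9A4 k B ((TensorProduct.assoc k B B B (t ⊗ₜ u)) ⊗ₜ (q * v)) =
      lTensor B (st9gmap k B)
        (st9A4' k B ((TensorProduct.assoc k B B B (t ⊗ₜ q)) ⊗ₜ (u ⊗ₜ[k] v))) := by
  induction t using TensorProduct.induction_on with
  | zero => simp [zero_tmul]
  | tmul s r =>
      rw [TensorProduct.assoc_tmul, TensorProduct.assoc_tmul]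
      rw [show st9A4 k B ((s ⊗ₜ[k] (r ⊗ₜ[k] u)) ⊗ₜ (q * v)) = s ⊗ₜ ((r ⊗ₜ[k] u) ⊗ₜ (q * v)) from
        TensorProduct.assoc_tmul s _ _]
      rw [show st9A4' k B ((s ⊗ₜ[k] (r ⊗ₜ[k] q)) ⊗ₜ (u ⊗ₜ[k] v)) =
        s ⊗ₜ ((r ⊗ₜ[k] q) ⊗ₜ (u ⊗ₜ[k] v)) from TensorProduct.assoc_tmul s _ _]
      rw [lTensor_tmul, st9gmap_tmul]
  | add w w' hw hw' => simp only [add_tmul, map_add, hw, hw']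

lemma st9M2 (d e : B ⊗[k] B) :
    st9A4 k B ((rTensor B (st9fmap k B)) (st9gmap k B (d ⊗ₜ e))) =
      lTensor B (st9gmap k B)
        (st9A4' k B ((TensorProduct.assoc k B B B ((rTensor B (comul (R := k))) d)) ⊗ₜ e)) := by
  induction d using TensorProduct.induction_on with
  | zero => rw [zero_tmul, map_zero, map_zero, map_zero, map_zero, map_zero, zero_tmul, map_zero,
      map_zero]
  | tmul p q =>
      induction e using TensorProduct.induction_on with
      | zero => rw [tmul_zero, map_zero, map_zero, map_zero, tmul_zero, map_zero, map_zero]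
      | tmul u v =>
          rw [st9gmap_tmul, rTensor_tmul, st9fmap_tmul, rTensor_tmul]
          exact st9M2aux k B (comul (R := k) p) q u v
      | add e1 e2 h1 h2 =>
          rw [tmul_add, map_add, map_add, map_add, tmul_add, map_add, map_add, h1, h2]
  | add d1 d2 h1 h2 =>
      rw [add_tmul, map_add, map_add, map_add, map_add, map_add, add_tmul, map_add, map_add,
        h1, h2]

lemma st9I3 : lTensor B (coact k B) ∘ₗ st9fmap k B =
    st9A4 k B ∘ₗ rTensor B (st9fmap k B) ∘ₗ coact k B := by
  apply TensorProduct.ext'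
  intro x y
  simp only [LinearMap.coe_comp, Function.comp_apply, st9fmap_tmul, st9_coact_tmul]
  rw [st9M1, st9M2]
  congr 3
  exact (Coalgebra.coassoc_apply (R := k) x).symm

lemma st9I4aux (u : B ⊗[k] (B ⊗[k] B)) :
    st9A4 k B (u ⊗ₜ (1 : B)) = lTensor B (unitR k B) u := by
  induction u using TensorProduct.induction_on with
  | zero => rw [zero_tmul, map_zero, map_zero]
  | tmul a m => rw [lTensor_tmul, st9_unitR_apply]; exact TensorProduct.assoc_tmul a m 1
  | add u v hu hv => rw [add_tmul, map_add, map_add, hu, hv]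

lemma st9I4 : lTensor B (unitR k B) ∘ₗ st9fmap k B =
    st9A4 k B ∘ₗ rTensor B (st9fmap k B) ∘ₗ unitR k B := by
  apply LinearMap.ext
  intro m
  simp only [LinearMap.coe_comp, Function.comp_apply, st9_unitR_apply, rTensor_tmul]
  rw [st9I4aux]

lemma st9ATM_eq {N P : Type*} [AddCommGroup N] [AddCommGroup P] [Module k N] [Module k P]
    (f : N →ₗ[k] P) :
    (AlgebraTensorModule.lTensor k B f : B ⊗[k] N →ₗ[k] B ⊗[k] P) = lTensor B f := rfl

end Stmt9Aux

section Stmt9Key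

open Coalgebra

set_option synthInstance.maxHeartbeats 1000000
set_option maxHeartbeats 1000000

variable (k B : Type*) [Field k] [Ring B] [Bialgebra k B]

lemma st9key (T : B →ₗ[k] B) (hT : ∀ z ∈ coinv k B, T (pB0 k B z) = qB0 k B z)
    (z : B ⊗[k] B) (hz : z ∈ coinv k B) :
    (TensorProduct.map LinearMap.id T) (Coalgebra.comul (R := k) (pB0 k B z)) = z := by
  have hz' : coact k B z = unitR k B z := hz
  have hw : lTensor B (coact k B) (st9fmap k B z) = lTensor B (unitR k B) (st9fmap k B z) := by
    have h3 := LinearMap.congr_fun (st9I3 k B) z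
    have h4 := LinearMap.congr_fun (st9I4 k B) z
    simp only [LinearMap.coe_comp, Function.comp_apply] at h3 h4
    rw [h3, h4, hz']
  obtain ⟨u, hu⟩ : st9fmap k B z ∈ LinearMap.range (lTensor B (coinv k B).subtype) := by
    have heq := Module.Flat.eqLocus_lTensor_eq (R := k) k B (coact k B) (unitR k B)
    rw [st9ATM_eq, st9ATM_eq, st9ATM_eq] at heq
    have hmem : st9fmap k B z ∈
        LinearMap.eqLocus (lTensor B (coact k B)) (lTensor B (unitR k B)) := hw
    rw [heq] at hmem
    exact hmem
  have hTq : (T ∘ₗ pB0 k B) ∘ₗ (coinv k B).subtype = qB0 k B ∘ₗ (coinv k B).subtype := by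
    apply LinearMap.ext
    rintro ⟨z', hz'⟩
    exact hT z' hz'
  calc (TensorProduct.map LinearMap.id T) (Coalgebra.comul (R := k) (pB0 k B z))
      = lTensor B T (Coalgebra.comul (R := k) (pB0 k B z)) := rfl
    _ = lTensor B T (lTensor B (pB0 k B) (st9fmap k B z)) := by
        have := LinearMap.congr_fun (st9I1 k B) z
        simp only [LinearMap.coe_comp, Function.comp_apply] at this
        rw [this]
    _ = lTensor B (T ∘ₗ pB0 k B) (st9fmap k B z) := by rw [lTensor_comp_apply]
    _ = lTensor B ((T ∘ₗ pB0 k B) ∘ₗ (coinv k B).subtype) u := by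
        rw [← hu, ← lTensor_comp_apply]
    _ = lTensor B (qB0 k B ∘ₗ (coinv k B).subtype) u := by rw [hTq]
    _ = lTensor B (qB0 k B) (st9fmap k B z) := by rw [lTensor_comp_apply, hu]
    _ = z := by
        have := LinearMap.congr_fun (st9I2 k B) z
        simp only [LinearMap.coe_comp, Function.comp_apply, LinearMap.id_coe, id_eq] at this
        exact this

lemma st9L1 (hinj : Function.Injective (pB k B)) :
    ∃ T : B →ₗ[k] B, ∀ z ∈ coinv k B, T (pB0 k B z) = qB0 k B z := by
  obtain ⟨g, hg⟩ := (pB k B).exists_leftInverse_of_injective (LinearMap.ker_eq_bot.mpr hinj)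
  refine ⟨qB0 k B ∘ₗ (coinv k B).subtype ∘ₗ g, fun z hz => ?_⟩
  have : pB0 k B z = pB k B ⟨z, hz⟩ := rfl
  rw [LinearMap.coe_comp, LinearMap.coe_comp, Function.comp_apply, Function.comp_apply, this]
  have hgz : g (pB k B ⟨z, hz⟩) = ⟨z, hz⟩ := LinearMap.congr_fun hg ⟨z, hz⟩
  rw [hgz]
  rfl

lemma st9L3 (T : B →ₗ[k] B)
    (hT : ∀ z ∈ coinv k B,
      (TensorProduct.map LinearMap.id T) (Coalgebra.comul (R := k) (pB0 k B z)) = z) :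
    Function.Injective (pB k B) := by
  intro z₁ z₂ h
  have h' : pB0 k B (z₁ : B ⊗[k] B) = pB0 k B (z₂ : B ⊗[k] B) := h
  have := hT z₁ z₁.2
  rw [h', hT z₂ z₂.2] at this
  exact Subtype.ext this.symm

end Stmt9Key

theorem stmt9 (k B : Type*) [Field k] [Ring B] [Bialgebra k B] :
    (Function.Injective (pB k B) ↔
      ∃ T : B →ₗ[k] B, ∀ z ∈ coinv k B, T (pB0 k B z) = qB0 k B z) ∧
    (Function.Injective (pB k B) ↔
      ∃ T : B →ₗ[k] B, ∀ z ∈ coinv k B,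
        (TensorProduct.map LinearMap.id T) (Coalgebra.comul (R := k) (pB0 k B z)) = z) := by
  have h12 : (∃ T : B →ₗ[k] B, ∀ z ∈ coinv k B, T (pB0 k B z) = qB0 k B z) →
      ∃ T : B →ₗ[k] B, ∀ z ∈ coinv k B,
        (TensorProduct.map LinearMap.id T) (Coalgebra.comul (R := k) (pB0 k B z)) = z := by
    rintro ⟨T, hT⟩
    exact ⟨T, fun z hz => st9key k B T hT z hz⟩
  constructor
  · constructor
    · exact st9L1 k B
    · rintro hT
      obtain ⟨T, hT2⟩ := h12 hT
      exact st9L3 k B T hT2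
  · constructor
    · intro hinj
      exact h12 (st9L1 k B hinj)
    · rintro ⟨T, hT⟩
      exact st9L3 k B T hT
end
end

section
/- Let f : B → B' be a bialgebra map that is right convolution invertible (there exists g : B → B' with f * g = u∘ε). If f is surjective and B' admits a left n-antipode, then B' is a Hopf algebra. Dually, if f is injective and B admits a left n-antipode, then B is a Hopf algebra. -/
noncomputable section
open TensorProduct LinearMap

/-! ### Auxiliary convolution lemmas -/

section ConvAux

variable {k B A : Type*} [CommRing k] [Ring B] [Bialgebra k B] [Ring A] [Algebra k A]

open Coalgebra in
lemma conv_apply_repr (f g : B →ₗ[k] A) (x : B) {ι : Type*} (repr : Coalgebra.Repr k x ι) :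
    conv f g x = ∑ i ∈ repr.index, f (repr.left i) * g (repr.right i) := by
  simp only [conv, LinearMap.comp_apply, ← repr.eq, map_sum, TensorProduct.map_tmul,
    LinearMap.mul'_apply]

open Coalgebra in
lemma convUnit_conv (h : B →ₗ[k] A) : conv (convUnit k B A) h = h := by
  ext x
  have key := Coalgebra.sum_counit_tmul_map_eq h x (repr := ℛ k x)
  apply_fun TensorProduct.lid k A at key
  simp only [map_sum, TensorProduct.lid_tmul, one_smul] at key
  rw [conv_apply_repr _ _ _ (ℛ k x)]
  simp only [convUnit, LinearMap.comp_apply, Algebra.linearMap_apply, ← Algebra.smul_def]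
  exact key

open Coalgebra in
lemma conv_convUnit (h : B →ₗ[k] A) : conv h (convUnit k B A) = h := by
  ext x
  have key := Coalgebra.sum_map_tmul_counit_eq h x (repr := ℛ k x)
  apply_fun TensorProduct.rid k A at key
  simp only [map_sum, TensorProduct.rid_tmul, one_smul] at key
  rw [conv_apply_repr _ _ _ (ℛ k x)]
  simp only [convUnit, LinearMap.comp_apply, Algebra.linearMap_apply]
  calc ∑ i ∈ (ℛ k x).index, h ((ℛ k x).left i) * algebraMap k A (Coalgebra.counit ((ℛ k x).right i))
      = ∑ i ∈ (ℛ k x).index, Coalgebra.counit (R := k) ((ℛ k x).right i) • h ((ℛ k x).left i) := by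
        refine Finset.sum_congr rfl fun i _ => ?_
        rw [← Algebra.commutes, ← Algebra.smul_def]
    _ = h x := key

open Coalgebra in
lemma conv_assoc_s10 (a b c : B →ₗ[k] A) : conv (conv a b) c = conv a (conv b c) := by
  ext x
  have key := Coalgebra.sum_map_tmul_tmul_eq a b c x (repr := ℛ k x)
    (a₁ := fun i => ℛ k ((ℛ k x).left i)) (a₂ := fun i => ℛ k ((ℛ k x).right i))
  apply_fun (LinearMap.mul' k A ∘ₗ (LinearMap.mul' k A).lTensor A) at key
  simp only [map_sum, LinearMap.comp_apply, LinearMap.lTensor_tmul, LinearMap.mul'_apply] at key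
  rw [conv_apply_repr _ _ _ (ℛ k x), conv_apply_repr _ _ _ (ℛ k x)]
  calc ∑ i ∈ (ℛ k x).index, conv a b ((ℛ k x).left i) * c ((ℛ k x).right i)
      = ∑ i ∈ (ℛ k x).index, ∑ j ∈ (ℛ k ((ℛ k x).left i)).index,
          a ((ℛ k ((ℛ k x).left i)).left j) *
            ((b ((ℛ k ((ℛ k x).left i)).right j)) * c ((ℛ k x).right i)) := by
        refine Finset.sum_congr rfl fun i _ => ?_
        rw [conv_apply_repr _ _ _ (ℛ k ((ℛ k x).left i)), Finset.sum_mul]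
        exact Finset.sum_congr rfl fun j _ => (mul_assoc _ _ _)
    _ = ∑ i ∈ (ℛ k x).index, ∑ j ∈ (ℛ k ((ℛ k x).right i)).index,
          a ((ℛ k x).left i) *
            (b ((ℛ k ((ℛ k x).right i)).left j) * c ((ℛ k ((ℛ k x).right i)).right j)) := key.symm
    _ = ∑ i ∈ (ℛ k x).index, a ((ℛ k x).left i) * conv b c ((ℛ k x).right i) := by
        refine Finset.sum_congr rfl fun i _ => ?_
        rw [conv_apply_repr _ _ _ (ℛ k ((ℛ k x).right i)), Finset.mul_sum]

/-- Iterated convolution powers of a linear map `B →ₗ[k] A`. -/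
def fpow (f : B →ₗ[k] A) : ℕ → (B →ₗ[k] A)
  | 0 => convUnit k B A
  | m + 1 => conv (fpow f m) f

lemma conv_fpow_succ_right (f g : B →ₗ[k] A) (hfg : conv f g = convUnit k B A) (m : ℕ) :
    conv (fpow f (m + 1)) g = fpow f m := by
  show conv (conv (fpow f m) f) g = fpow f m
  rw [conv_assoc_s10, hfg, conv_convUnit]

lemma conv_descend (f g : B →ₗ[k] A) (hfg : conv f g = convUnit k B A) :
    ∀ n, ∀ T : B →ₗ[k] A, conv T (fpow f (n + 1)) = fpow f n → conv T f = convUnit k B A := by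
  intro n
  induction n with
  | zero =>
    intro T h
    have h1 : fpow f 1 = f := by
      show conv (convUnit k B A) f = f
      rw [convUnit_conv]
    rw [h1] at h
    exact h
  | succ m ih =>
    intro T h
    apply ih
    have h2 := congrArg (fun X => conv X g) h
    rw [conv_assoc_s10, conv_fpow_succ_right f g hfg, conv_fpow_succ_right f g hfg] at h2
    exact h2

lemma conv_right_inv_unique (f g T : B →ₗ[k] A) (hfg : conv f g = convUnit k B A)
    (hT : conv T f = convUnit k B A) : T = g := by
  have h : conv (conv T f) g = conv (convUnit k B A) g := by rw [hT]
  rw [conv_assoc_s10, hfg, conv_convUnit, convUnit_conv] at h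
  exact h

lemma convPow_eq_fpow (m : ℕ) :
    convPow k B m = fpow (LinearMap.id : B →ₗ[k] B) m := by
  induction m with
  | zero => rfl
  | succ m ih => show conv (convPow k B m) LinearMap.id = _; rw [ih]; rfl

end ConvAux

section ConvComp

variable {k B B' A : Type*} [CommRing k] [Ring B] [Bialgebra k B] [Ring B'] [Bialgebra k B']
  [Ring A] [Algebra k A]

open Coalgebra in
lemma comp_conv (φ : B →ₐc[k] B') {C : Type*} [Ring C] [Bialgebra k C] (a b : C →ₗ[k] B) :
    φ.toLinearMap ∘ₗ conv a b = conv (φ.toLinearMap ∘ₗ a) (φ.toLinearMap ∘ₗ b) := by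
  ext x
  simp only [LinearMap.comp_apply, conv_apply_repr _ _ x (ℛ k x), map_sum]
  exact Finset.sum_congr rfl fun i _ => map_mul φ _ _

open Coalgebra in
lemma conv_comp (φ : B →ₐc[k] B') (a b : B' →ₗ[k] A) :
    conv a b ∘ₗ φ.toLinearMap = conv (a ∘ₗ φ.toLinearMap) (b ∘ₗ φ.toLinearMap) := by
  ext x
  have hrepr : (∑ i ∈ (ℛ k x).index,
      (φ ((ℛ k x).left i) : B') ⊗ₜ[k] (φ ((ℛ k x).right i) : B')) =
      Coalgebra.comul (R := k) (φ x) := by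
    have := CoalgHomClass.map_comp_comul_apply φ x
    rw [← this, ← (ℛ k x).eq]
    simp [map_sum]
  let r2 : Coalgebra.Repr k (φ x) (B × B) :=
    ⟨(ℛ k x).index, fun i => φ ((ℛ k x).left i), fun i => φ ((ℛ k x).right i), hrepr⟩
  show conv a b (φ x) = _
  rw [conv_apply_repr a b (φ x) r2, conv_apply_repr _ _ x (ℛ k x)]
  rfl

lemma convUnit_comp (φ : B →ₐc[k] B') :
    convUnit k B' B' ∘ₗ φ.toLinearMap = convUnit k B B' := by
  ext x
  simp only [convUnit, LinearMap.comp_apply, Algebra.linearMap_apply]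
  exact congrArg (algebraMap k B') (CoalgHomClass.counit_comp_apply φ x)

lemma comp_convUnit (φ : B →ₐc[k] B') :
    φ.toLinearMap ∘ₗ convUnit k B B = convUnit k B B' := by
  ext x
  simp only [convUnit, LinearMap.comp_apply, Algebra.linearMap_apply]
  exact AlgHomClass.commutes φ _

lemma convPow_comp (φ : B →ₐc[k] B') (m : ℕ) :
    convPow k B' m ∘ₗ φ.toLinearMap = fpow φ.toLinearMap m := by
  induction m with
  | zero => exact convUnit_comp φ
  | succ m ih =>
    show conv (convPow k B' m) LinearMap.id ∘ₗ φ.toLinearMap = _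
    rw [conv_comp, ih, LinearMap.id_comp]
    rfl

lemma comp_convPow (φ : B →ₐc[k] B') (m : ℕ) :
    φ.toLinearMap ∘ₗ convPow k B m = fpow φ.toLinearMap m := by
  induction m with
  | zero => exact comp_convUnit φ
  | succ m ih =>
    show φ.toLinearMap ∘ₗ conv (convPow k B m) LinearMap.id = _
    rw [comp_conv, ih, LinearMap.comp_id]
    rfl

end ConvComp

theorem stmt10 (k B B' : Type*) [Field k] [Ring B] [Bialgebra k B]
    [Ring B'] [Bialgebra k B']
    (f : B →ₐc[k] B') (g : B →ₗ[k] B')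
    (hg : conv f.toLinearMap g = convUnit k B B') :
    (Function.Surjective f →
      (∃ (n : ℕ) (S : B' →ₗ[k] B'), conv S (convPow k B' (n + 1)) = convPow k B' n) →
      ∃ S : B' →ₗ[k] B', conv S LinearMap.id = convUnit k B' B' ∧
        conv LinearMap.id S = convUnit k B' B') ∧
    (Function.Injective f →
      (∃ (n : ℕ) (S : B →ₗ[k] B), conv S (convPow k B (n + 1)) = convPow k B n) →
      ∃ S : B →ₗ[k] B, conv S LinearMap.id = convUnit k B B ∧
        conv LinearMap.id S = convUnit k B B) := by
  constructor
  · rintro hsurj ⟨n, S', hS'⟩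
    -- compose the left n-antipode identity with f on the right
    have h1 : conv (S' ∘ₗ f.toLinearMap) (fpow f.toLinearMap (n + 1)) = fpow f.toLinearMap n := by
      have h := congrArg (fun X => X ∘ₗ f.toLinearMap) hS'
      rw [conv_comp, convPow_comp, convPow_comp] at h
      exact h
    have h2 : conv (S' ∘ₗ f.toLinearMap) f.toLinearMap = convUnit k B B' :=
      conv_descend f.toLinearMap g hg n _ h1
    have h3 : S' ∘ₗ f.toLinearMap = g := conv_right_inv_unique f.toLinearMap g _ hg h2
    -- now Id * S' = u ε on B'
    have h4 : conv LinearMap.id S' ∘ₗ f.toLinearMap = convUnit k B' B' ∘ₗ f.toLinearMap := by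
      rw [conv_comp, LinearMap.id_comp, h3, hg, convUnit_comp]
    have hrid : conv LinearMap.id S' = convUnit k B' B' := by
      ext y
      obtain ⟨x, rfl⟩ := hsurj y
      exact LinearMap.congr_fun h4 x
    refine ⟨S', ?_, hrid⟩
    -- S' * Id = u ε follows from the left n-antipode identity and Id * S' = u ε
    rw [convPow_eq_fpow, convPow_eq_fpow] at hS'
    exact conv_descend LinearMap.id S' hrid n S' hS'
  · rintro hinj ⟨n, S, hS⟩
    have h1 : conv (f.toLinearMap ∘ₗ S) (fpow f.toLinearMap (n + 1)) = fpow f.toLinearMap n := by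
      have h := congrArg (fun X => f.toLinearMap ∘ₗ X) hS
      rw [comp_conv, comp_convPow, comp_convPow] at h
      exact h
    have h2 : conv (f.toLinearMap ∘ₗ S) f.toLinearMap = convUnit k B B' :=
      conv_descend f.toLinearMap g hg n _ h1
    have h3 : f.toLinearMap ∘ₗ S = g := conv_right_inv_unique f.toLinearMap g _ hg h2
    have h4 : f.toLinearMap ∘ₗ conv LinearMap.id S = f.toLinearMap ∘ₗ convUnit k B B := by
      rw [comp_conv, LinearMap.comp_id, h3, hg, comp_convUnit]
    have hrid : conv LinearMap.id S = convUnit k B B := by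
      ext x
      exact hinj (LinearMap.congr_fun h4 x)
    refine ⟨S, ?_, hrid⟩
    rw [convPow_eq_fpow, convPow_eq_fpow] at hS
    exact conv_descend LinearMap.id S hrid n S hS
end
end

section
/- Let B be a bialgebra that is generated as an algebra by a subset {xᵢ : i ∈ I}, and suppose that for every i there exists xᵢ' ∈ B with 1 ⊘ xᵢ = xᵢ' ⊘ 1 in B ⊘ B. Then the canonical map i_B : B → B ⊘ B, b ↦ b ⊘ 1, is surjective. -/
noncomputable section
open TensorProduct LinearMap

/-- The set of elements y admitting y' with a ⊘ by = ay' ⊘ b for all a b. -/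
def goodSet (k B : Type*) [CommRing k] [Ring B] [Bialgebra k B] : Subalgebra k B where
  carrier := {y | ∃ y' : B, ∀ a b : B,
    omk k (a ⊗ₜ[k] (b * y)) = omk k ((a * y') ⊗ₜ[k] b)}
  one_mem' := ⟨1, fun a b => by rw [mul_one, mul_one]⟩
  mul_mem' := by
    rintro y z ⟨y', hy⟩ ⟨z', hz⟩
    refine ⟨z' * y', fun a b => ?_⟩
    rw [← mul_assoc b y z, hz a (b * y), hy (a * z') b, mul_assoc]
  add_mem' := by
    rintro y z ⟨y', hy⟩ ⟨z', hz⟩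
    refine ⟨y' + z', fun a b => ?_⟩
    rw [mul_add, mul_add, TensorProduct.tmul_add, TensorProduct.add_tmul]
    simp only [Submodule.Quotient.mk_add]; exact congrArg₂ (· + ·) (hy a b) (hz a b)
  algebraMap_mem' := by
    intro r
    refine ⟨algebraMap k B r, fun a b => ?_⟩
    rw [← Algebra.commutes r b, ← Algebra.smul_def, ← Algebra.commutes r a,
      ← Algebra.smul_def, TensorProduct.tmul_smul, TensorProduct.smul_tmul']

theorem stmt11 (k B : Type*) [Field k] [Ring B] [Bialgebra k B]
    (X : Set B) (hgen : Algebra.adjoin k X = ⊤)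
    (h : ∀ x ∈ X, ∃ x' : B,
      omk k ((1 : B) ⊗ₜ[k] x) = omk k (x' ⊗ₜ[k] (1 : B))) :
    Function.Surjective (iB k B) := by
  -- every generator lies in goodSet
  have hX : X ⊆ (goodSet k B : Set B) := by
    intro x hx
    obtain ⟨x', hx'⟩ := h x hx
    refine ⟨x', fun a b => ?_⟩
    rw [Submodule.Quotient.eq] at hx' ⊢
    have := oslashRel_mul_mem k B (a ⊗ₜ[k] b) hx'
    rwa [mul_sub, Algebra.TensorProduct.tmul_mul_tmul,
      Algebra.TensorProduct.tmul_mul_tmul, mul_one, mul_one] at this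
  have htop : (⊤ : Subalgebra k B) ≤ goodSet k B := hgen ▸ Algebra.adjoin_le hX
  have hgood : ∀ y : B, ∃ y' : B, ∀ a b : B,
      omk k (a ⊗ₜ[k] (b * y)) = omk k ((a * y') ⊗ₜ[k] b) :=
    fun y => htop (by trivial)
  intro q
  obtain ⟨z, rfl⟩ := Submodule.Quotient.mk_surjective _ q
  suffices hmem : (omk k z : Oslash k B) ∈ LinearMap.range (iB k B) by
    obtain ⟨c, hc⟩ := hmem
    exact ⟨c, hc⟩
  induction z using TensorProduct.induction_on with
  | zero => exact ⟨0, by simp⟩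
  | tmul a b =>
    obtain ⟨b', hb'⟩ := hgood b
    refine ⟨a * b', ?_⟩
    have := hb' a 1
    rw [one_mul] at this
    rw [iB]
    simpa using this.symm
  | add z₁ z₂ h₁ h₂ =>
    simp only [Submodule.Quotient.mk_add]
    exact Submodule.add_mem _ h₁ h₂
end
end

section
/- Let M be a regular monoid (for every x ∈ M there exists x† ∈ M with x·x†·x = x) and let B = kM be the monoid bialgebra. Then for every x ∈ M one has 1 ⊘ x = x† ⊘ 1 in B ⊘ B, and hence i_B : B → B ⊘ B is surjective. -/
noncomputable section
open TensorProduct LinearMap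

/-- The monoid bialgebra `kM` is encoded as a bialgebra `B` together
with a multiplicative map `φ : M →* B` whose image consists of grouplike elements and
forms a `k`-basis of `B`. -/
theorem stmt12 (k B M : Type*) [Field k] [Ring B] [Bialgebra k B] [Monoid M]
    (φ : M →* B)
    (hΔ : ∀ g : M, Coalgebra.comul (R := k) (φ g) = φ g ⊗ₜ[k] φ g)
    (hε : ∀ g : M, Coalgebra.counit (R := k) (φ g) = 1)
    (hbasis : ∃ bas : Module.Basis M k B, ∀ g : M, bas g = φ g)
    (hreg : ∀ x : M, ∃ d : M, x * d * x = x) :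
    (∀ x d : M, x * d * x = x →
      omk k ((1 : B) ⊗ₜ[k] φ x) = omk k (φ d ⊗ₜ[k] (1 : B))) ∧
    Function.Surjective (iB k B) := by
  classical
  obtain ⟨bas, hbas⟩ := hbasis
  -- generators of oslashRel
  have hgen : ∀ (m : B ⊗[k] B) (g : M),
      m * (Coalgebra.comul (R := k) (φ g - 1)) ∈ oslashRel k B := by
    intro m g
    refine Submodule.subset_span ⟨m, φ g - 1, ?_, rfl⟩
    simp [map_sub, hε g]
  have key0 : ∀ (x : B) (h d : M), h * d * h = h →
      x ⊗ₜ[k] φ h - (x * φ d) ⊗ₜ[k] (1 : B) ∈ oslashRel k B := by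
    intro x h d hd
    have e : x ⊗ₜ[k] φ h - (x * φ d) ⊗ₜ[k] (1 : B)
        = ((x * φ d) ⊗ₜ[k] (1 : B)) * Coalgebra.comul (R := k) (φ h - 1)
          - (x ⊗ₜ[k] φ h) * Coalgebra.comul (R := k) (φ (d * h) - 1) := by
      have h1 : φ h * φ (d * h) = φ h := by
        rw [← map_mul, ← mul_assoc, hd]
      have h2 : x * φ d * φ h = x * φ (d * h) := by rw [map_mul, mul_assoc]
      simp only [map_sub, hΔ, Bialgebra.comul_one, mul_sub, mul_one,
        Algebra.TensorProduct.tmul_mul_tmul, one_mul, h1, h2]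
      abel
    rw [e]
    exact sub_mem (hgen _ _) (hgen _ _)
  have hiB : ∀ b : B, iB k B b = omk k (b ⊗ₜ[k] (1 : B)) := fun b => rfl
  have key : ∀ (x : B) (h d : M), h * d * h = h →
      omk k (x ⊗ₜ[k] φ h) = iB k B (x * φ d) := by
    intro x h d hd
    rw [hiB]
    exact (Submodule.Quotient.eq _).mpr (key0 x h d hd)
  constructor
  · intro x d hd
    have := key 1 x d hd
    rw [one_mul] at this
    rw [this, hiB]
  · intro z
    obtain ⟨m, rfl⟩ := Submodule.Quotient.mk_surjective _ z
    suffices h : omk k m ∈ LinearMap.range (iB k B) by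
      obtain ⟨b, hb⟩ := h
      exact ⟨b, hb⟩
    have hm : m ∈ Submodule.span k {t : B ⊗[k] B | ∃ x y, x ⊗ₜ[k] y = t} := by
      rw [TensorProduct.span_tmul_eq_top]; trivial
    induction hm using Submodule.span_induction with
    | mem t ht =>
      obtain ⟨x, y, rfl⟩ := ht
      -- inner induction on y
      have hy : y ∈ Submodule.span k (Set.range fun g : M => φ g) := by
        have : Set.range (fun g : M => φ g) = Set.range bas := by
          ext b; constructor
          · rintro ⟨g, rfl⟩; exact ⟨g, hbas g⟩
          · rintro ⟨g, rfl⟩; exact ⟨g, (hbas g).symm⟩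
        rw [this, bas.span_eq]; trivial
      induction hy using Submodule.span_induction with
      | mem u hu =>
        obtain ⟨h, rfl⟩ := hu
        obtain ⟨d, hd⟩ := hreg h
        exact ⟨x * φ d, (key x h d hd).symm⟩
      | zero => rw [TensorProduct.tmul_zero]; exact zero_mem _
      | add u v hu hv ihu ihv =>
        rw [TensorProduct.tmul_add]
        exact add_mem ihu ihv
      | smul c u hu ihu =>
        rw [TensorProduct.tmul_smul]
        exact Submodule.smul_mem _ _ ihu
    | zero => exact zero_mem _
    | add u v hu hv ihu ihv => exact add_mem ihu ihv
    | smul c u hu ihu => exact Submodule.smul_mem _ _ ihu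
end
end

section
/- Fix n ∈ ℕ and let M = ⟨x | x^{n+1} = x^n⟩ be the monoid presented by one generator x with relation x^{n+1} = x^n. Then in the monoid bialgebra kM one has Id^{*(n+1)} = Id^{*n} in the convolution algebra End_k(kM), so both Id and u∘ε are two-sided n-antipodes; moreover n is minimal with this property, so kM is an n-Hopf algebra. -/
noncomputable section
open TensorProduct LinearMap

/-- The monoid ⟨x | x^{n+1} = x^n⟩, presented as a quotient of the free monoid on one
generator (realised as `Multiplicative ℕ`) by the congruence generated by the relation
x^{n+1} = x^n. -/
abbrev PresM (n : ℕ) : Type :=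
  (conGen (fun a b : Multiplicative ℕ =>
    a = Multiplicative.ofAdd (n + 1) ∧ b = Multiplicative.ofAdd n)).Quotient

namespace Stmt13Aux

/-- The saturation congruence: identify a,b iff min a n = min b n. -/
def sat (n : ℕ) : Con (Multiplicative ℕ) where
  r a b := min a.toAdd n = min b.toAdd n
  iseqv := ⟨fun _ => rfl, fun h => h.symm, fun h h' => h.trans h'⟩
  mul' := by
    intro a b c d h h'
    simp only [toAdd_mul] at *
    omega

abbrev rel (n : ℕ) : Multiplicative ℕ → Multiplicative ℕ → Prop :=
  fun a b => a = Multiplicative.ofAdd (n + 1) ∧ b = Multiplicative.ofAdd n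

lemma conGen_le_sat (n : ℕ) : conGen (rel n) ≤ sat n := by
  apply Con.conGen_le.mpr
  rintro a b ⟨ha, hb⟩
  rw [ha, hb]
  show min (Multiplicative.toAdd (Multiplicative.ofAdd (n+1))) n
    = min (Multiplicative.toAdd (Multiplicative.ofAdd n)) n
  rw [toAdd_ofAdd, toAdd_ofAdd]
  omega

def π (n : ℕ) : Multiplicative ℕ →* (conGen (rel n)).Quotient := Con.mk' _

lemma π_apply (n : ℕ) (x : Multiplicative ℕ) : π n x = (x : (conGen (rel n)).Quotient) := rfl

lemma min_eq_of_eq {n a b : ℕ}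
    (h : π n (Multiplicative.ofAdd a) = π n (Multiplicative.ofAdd b)) :
    min a n = min b n := by
  rw [π_apply, π_apply] at h
  have := conGen_le_sat n ((Con.eq _).mp h)
  have h2 : min (Multiplicative.ofAdd a).toAdd n = min (Multiplicative.ofAdd b).toAdd n := this
  simpa using h2

lemma base (n : ℕ) : π n (Multiplicative.ofAdd (n + 1)) = π n (Multiplicative.ofAdd n) := by
  rw [π_apply, π_apply]
  exact (Con.eq _).mpr (ConGen.Rel.of _ _ ⟨rfl, rfl⟩)

lemma high (n : ℕ) : ∀ p, n ≤ p → π n (Multiplicative.ofAdd p) = π n (Multiplicative.ofAdd n) := by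
  intro p hp
  induction p, hp using Nat.le_induction with
  | base => rfl
  | succ p hp ih =>
    have h1 : Multiplicative.ofAdd (p + 1) = Multiplicative.ofAdd p * Multiplicative.ofAdd 1 := by
      rw [← ofAdd_add]
    have h2 : Multiplicative.ofAdd n * Multiplicative.ofAdd 1 = Multiplicative.ofAdd (n + 1) := by
      rw [← ofAdd_add]
    rw [h1, map_mul, ih, ← map_mul, h2, base]

lemma pow_π (n a m : ℕ) : (π n (Multiplicative.ofAdd a)) ^ m = π n (Multiplicative.ofAdd (m * a)) := by
  have h : (Multiplicative.ofAdd a) ^ m = Multiplicative.ofAdd (m * a) := by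
    rw [← ofAdd_nsmul]; rfl
  rw [← map_pow, h]

lemma surj (n : ℕ) (g : (conGen (rel n)).Quotient) :
    ∃ a, a ≤ n ∧ g = π n (Multiplicative.ofAdd a) := by
  induction g using Con.induction_on with
  | H x =>
    have hx : (x : (conGen (rel n)).Quotient) = π n (Multiplicative.ofAdd x.toAdd) := rfl
    rcases le_or_gt x.toAdd n with h | h
    · exact ⟨x.toAdd, h, hx⟩
    · exact ⟨n, le_rfl, by rw [hx, high n _ h.le]⟩

lemma pow_sat (n : ℕ) (g : (conGen (rel n)).Quotient) : g ^ (n + 1) = g ^ n := by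
  obtain ⟨a, _, rfl⟩ := surj n g
  rw [pow_π, pow_π]
  rcases Nat.eq_zero_or_pos a with rfl | ha
  · simp
  · rw [high n ((n+1)*a) (by nlinarith), high n (n*a) (by nlinarith)]

end Stmt13Aux

/-- The monoid bialgebra `k⟨x | x^{n+1} = x^n⟩` is encoded as a bialgebra
`B` with a basis of grouplike elements indexed multiplicatively by `PresM n`. -/
theorem stmt13 (n : ℕ) (k B : Type*) [Field k] [Ring B] [Bialgebra k B]
    (φ : PresM n →* B)
    (hΔ : ∀ g : PresM n, Coalgebra.comul (R := k) (φ g) = φ g ⊗ₜ[k] φ g)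
    (hε : ∀ g : PresM n, Coalgebra.counit (R := k) (φ g) = 1)
    (hbasis : ∃ bas : Module.Basis (PresM n) k B, ∀ g : PresM n, bas g = φ g) :
    convPow k B (n + 1) = convPow k B n ∧
    conv LinearMap.id (convPow k B (n + 1)) = convPow k B n ∧
    conv (convPow k B (n + 1)) LinearMap.id = convPow k B n ∧
    conv (convUnit k B B) (convPow k B (n + 1)) = convPow k B n ∧
    conv (convPow k B (n + 1)) (convUnit k B B) = convPow k B n ∧
    (∀ m : ℕ, (∃ S : B →ₗ[k] B, conv S (convPow k B (m + 1)) = convPow k B m) → n ≤ m) ∧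
    (∀ m : ℕ, (∃ S : B →ₗ[k] B, conv (convPow k B (m + 1)) S = convPow k B m) → n ≤ m) := by
  classical
  obtain ⟨bas, hbas⟩ := hbasis
  -- basic computation rules
  have hconv : ∀ (f g : B →ₗ[k] B) (h : PresM n), conv f g (φ h) = f (φ h) * g (φ h) := by
    intro f g h
    simp only [conv, LinearMap.coe_comp, Function.comp_apply]
    rw [hΔ h]
    simp only [TensorProduct.map_tmul, LinearMap.mul'_apply]
  have hunit : ∀ h : PresM n, convUnit k B B (φ h) = 1 := by
    intro h
    simp only [convUnit, LinearMap.coe_comp, Function.comp_apply, Algebra.linearMap_apply]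
    rw [hε h, map_one]
  have hpow : ∀ (m : ℕ) (h : PresM n), convPow k B m (φ h) = φ (h ^ m) := by
    intro m
    induction m with
    | zero => intro h; rw [show convPow k B 0 = convUnit k B B from rfl, hunit, pow_zero, map_one]
    | succ m ih =>
      intro h
      rw [show convPow k B (m+1) = conv (convPow k B m) LinearMap.id from rfl, hconv, ih,
        LinearMap.id_apply, ← map_mul, ← pow_succ]
  have hsat : ∀ g : PresM n, g ^ (n + 1) = g ^ n := fun g => Stmt13Aux.pow_sat n g
  have hsat2 : ∀ g : PresM n, g ^ (n + 2) = g ^ n := by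
    intro g
    rw [pow_succ, hsat g, ← pow_succ, hsat g]
  refine ⟨?_, ?_, ?_, ?_, ?_, ?_, ?_⟩
  · apply bas.ext
    intro g
    rw [hbas, hpow, hpow, hsat]
  · apply bas.ext
    intro g
    rw [hbas, hconv, hpow, LinearMap.id_apply, ← map_mul, hpow, ← pow_succ', hsat2]
  · apply bas.ext
    intro g
    rw [hbas, hconv, hpow, LinearMap.id_apply, ← map_mul, hpow, ← pow_succ, hsat2]
  · apply bas.ext
    intro g
    rw [hbas, hconv, hunit, hpow, one_mul, hpow, hsat]
  · apply bas.ext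
    intro g
    rw [hbas, hconv, hunit, hpow, mul_one, hpow, hsat]
  · rintro m ⟨S, hS⟩
    by_contra hcon
    push_neg at hcon
    have hmn : m + 1 ≤ n := hcon
    set g₀ : PresM n := Stmt13Aux.π n (Multiplicative.ofAdd 1) with hg₀
    have h1 : S (φ g₀) * φ (g₀ ^ (m+1)) = φ (g₀ ^ m) := by
      have := LinearMap.congr_fun hS (φ g₀)
      rwa [hconv, hpow, hpow] at this
    set T : B →ₗ[k] k :=
      (bas.coord (g₀ ^ m)).comp (LinearMap.mulRight k (φ (g₀ ^ (m+1)))) with hT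
    have hne : ∀ g : PresM n, g * g₀ ^ (m+1) ≠ g₀ ^ m := by
      intro g hgeq
      obtain ⟨a, _, rfl⟩ := Stmt13Aux.surj n g
      rw [hg₀, Stmt13Aux.pow_π, Stmt13Aux.pow_π, ← map_mul, ← ofAdd_add] at hgeq
      have := Stmt13Aux.min_eq_of_eq hgeq
      omega
    have hT0 : T = 0 := by
      apply bas.ext
      intro g
      rw [hT, LinearMap.comp_apply, LinearMap.mulRight_apply, hbas, ← map_mul,
        ← hbas, LinearMap.zero_apply, Module.Basis.coord_apply, Module.Basis.repr_self,
        Finsupp.single_apply, if_neg (hne g)]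
    have hT1 : T (S (φ g₀)) = 1 := by
      rw [hT, LinearMap.comp_apply, LinearMap.mulRight_apply, h1, ← hbas,
        Module.Basis.coord_apply, Module.Basis.repr_self, Finsupp.single_apply, if_pos rfl]
    rw [hT0] at hT1
    exact one_ne_zero hT1.symm
  · rintro m ⟨S, hS⟩
    by_contra hcon
    push_neg at hcon
    have hmn : m + 1 ≤ n := hcon
    set g₀ : PresM n := Stmt13Aux.π n (Multiplicative.ofAdd 1) with hg₀
    have h1 : φ (g₀ ^ (m+1)) * S (φ g₀) = φ (g₀ ^ m) := by
      have := LinearMap.congr_fun hS (φ g₀)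
      rwa [hconv, hpow, hpow] at this
    set T : B →ₗ[k] k :=
      (bas.coord (g₀ ^ m)).comp (LinearMap.mulLeft k (φ (g₀ ^ (m+1)))) with hT
    have hne : ∀ g : PresM n, g₀ ^ (m+1) * g ≠ g₀ ^ m := by
      intro g hgeq
      obtain ⟨a, _, rfl⟩ := Stmt13Aux.surj n g
      rw [hg₀, Stmt13Aux.pow_π, Stmt13Aux.pow_π, ← map_mul, ← ofAdd_add] at hgeq
      have := Stmt13Aux.min_eq_of_eq hgeq
      omega
    have hT0 : T = 0 := by
      apply bas.ext
      intro g
      rw [hT, LinearMap.comp_apply, LinearMap.mulLeft_apply, hbas, ← map_mul,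
        ← hbas, LinearMap.zero_apply, Module.Basis.coord_apply, Module.Basis.repr_self,
        Finsupp.single_apply, if_neg (hne g)]
    have hT1 : T (S (φ g₀)) = 1 := by
      rw [hT, LinearMap.comp_apply, LinearMap.mulLeft_apply, h1, ← hbas,
        Module.Basis.coord_apply, Module.Basis.repr_self, Finsupp.single_apply, if_pos rfl]
    rw [hT0] at hT1
    exact one_ne_zero hT1.symm
end
end
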